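/- arXiv:2305.19685 — 4 statements merged into one kernel-verified Lean document; each statement's English description precedes it below -/
import Mathlib

section
/- Suppose that at every (x,t) ∈ ℝ^d × ℝ the pair (S, ρ) satisfies (i) −ħ ∂_t S = −(ħ²/(2m)) ( ½ Δ log ρ + ¼ ‖∇ log ρ‖² − ‖∇S‖² ) + V and (ii) (ħ/2) ∂_t log ρ = −(ħ²/(2m)) ( ΔS + ⟨∇ log ρ, ∇S⟩ ). Define the current velocity v := (ħ/m) ∇S and the osmotic velocity u := (ħ/(2m)) ∇ log ρ. Then at every (x,t) ∈ ℝ^d × ℝ: ∂_t v = −(1/m) ∇V + ⟨u, ∇⟩u − ⟨v, ∇⟩v + (ħ/(2m)) ∇⟨∇, u⟩ and ∂_t u = −∇⟨v, u⟩ − (ħ/(2m)) ∇⟨∇, v⟩. -/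
noncomputable section

/-- Spatial partial derivative in the `j`-th coordinate direction. -/
def pdx {d : ℕ} {E : Type*} [NormedAddCommGroup E] [NormedSpace ℝ E]
    (j : Fin d) (f : (Fin d → ℝ) → E) (x : Fin d → ℝ) : E :=
  fderiv ℝ f x (Pi.single j 1)

/-- The current velocity `v = (ℏ/m) ∇S` (the `i`-th component). -/
def cvel {d : ℕ} (ℏ m : ℝ) (S : (Fin d → ℝ) → ℝ → ℝ)
    (x : Fin d → ℝ) (t : ℝ) (i : Fin d) : ℝ :=
  (ℏ / m) * pdx i (fun y => S y t) x

/-- The osmotic velocity `u = (ℏ/(2m)) ∇ log ρ` (the `i`-th component). -/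
def ovel {d : ℕ} (ℏ m : ℝ) (ρ : (Fin d → ℝ) → ℝ → ℝ)
    (x : Fin d → ℝ) (t : ℝ) (i : Fin d) : ℝ :=
  (ℏ / (2 * m)) * pdx i (fun y => Real.log (ρ y t)) x

namespace SMAux

variable {E : Type*} [NormedAddCommGroup E] [NormedSpace ℝ E]

lemma diffAt {f : E → ℝ} (hf : ContDiff ℝ (⊤ : ℕ∞) f) (p : E) : DifferentiableAt ℝ f p :=
  (hf.differentiable (by simp)).differentiableAt

lemma contDiff_dd {f : E → ℝ} (hf : ContDiff ℝ (⊤ : ℕ∞) f) (w : E) :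
    ContDiff ℝ (⊤ : ℕ∞) (fun p => fderiv ℝ f p w) :=
  (hf.fderiv_right (m := (⊤:ℕ∞)) (by exact_mod_cast le_top)).clm_apply contDiff_const

lemma dd_symm {f : E → ℝ} (hf : ContDiff ℝ (⊤ : ℕ∞) f) (p w w' : E) :
    fderiv ℝ (fun q => fderiv ℝ f q w) p w' = fderiv ℝ (fun q => fderiv ℝ f q w') p w := by
  have hdf : Differentiable ℝ f := hf.differentiable (by simp)
  have h2 : DifferentiableAt ℝ (fderiv ℝ f) p :=
    ((hf.fderiv_right (m := (⊤:ℕ∞)) (by exact_mod_cast le_top)).differentiable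
      (by simp)).differentiableAt
  have hsymm := second_derivative_symmetric (f := f) (f' := fderiv ℝ f)
      (fun y => (hdf y).hasFDerivAt) h2.hasFDerivAt
  have key : ∀ w : E, fderiv ℝ (fun q => fderiv ℝ f q w) p
      = (fderiv ℝ (fderiv ℝ f) p).flip w := by
    intro w
    rw [fderiv_clm_apply h2 (differentiableAt_const w)]
    simp
  rw [key w, key w']
  exact hsymm w' w

lemma dd_const_mul {f : E → ℝ} {p : E} (hf : DifferentiableAt ℝ f p) (c : ℝ) (w : E) :
    fderiv ℝ (fun q => c * f q) p w = c * fderiv ℝ f p w := by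
  rw [fderiv_const_mul hf]; simp

lemma dd_mul {f g : E → ℝ} {p : E} (hf : DifferentiableAt ℝ f p)
    (hg : DifferentiableAt ℝ g p) (w : E) :
    fderiv ℝ (fun q => f q * g q) p w
      = fderiv ℝ f p w * g p + f p * fderiv ℝ g p w := by
  rw [fderiv_fun_mul hf hg]; simp; ring

lemma dd_sq {f : E → ℝ} {p : E} (hf : DifferentiableAt ℝ f p) (w : E) :
    fderiv ℝ (fun q => f q ^ 2) p w = 2 * (f p * fderiv ℝ f p w) := by
  have : (fun q => f q ^ 2) = fun q => f q * f q := by funext q; ring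
  rw [this, dd_mul hf hf]; ring

lemma dd_add {f g : E → ℝ} {p : E} (hf : DifferentiableAt ℝ f p)
    (hg : DifferentiableAt ℝ g p) (w : E) :
    fderiv ℝ (fun q => f q + g q) p w = fderiv ℝ f p w + fderiv ℝ g p w := by
  rw [fderiv_fun_add hf hg]; simp

lemma dd_sub {f g : E → ℝ} {p : E} (hf : DifferentiableAt ℝ f p)
    (hg : DifferentiableAt ℝ g p) (w : E) :
    fderiv ℝ (fun q => f q - g q) p w = fderiv ℝ f p w - fderiv ℝ g p w := by
  rw [fderiv_fun_sub hf hg]; simp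

lemma dd_sum {ι : Type*} (s : Finset ι) {f : ι → E → ℝ} {p : E}
    (hf : ∀ i ∈ s, DifferentiableAt ℝ (f i) p) (w : E) :
    fderiv ℝ (fun q => ∑ i ∈ s, f i q) p w = ∑ i ∈ s, fderiv ℝ (f i) p w := by
  rw [fderiv_fun_sum hf]; simp

end SMAux

open SMAux

/-- The time-slice plane vector `eₛ j = (single j 1, 0)`. -/
def es {d : ℕ} (j : Fin d) : (Fin d → ℝ) × ℝ := (Pi.single j 1, 0)

/-- The time direction vector. -/
def et {d : ℕ} : (Fin d → ℝ) × ℝ := ((0 : Fin d → ℝ), (1 : ℝ))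

/-- log of the uncurried density. -/
def uL {d : ℕ} (ρ : (Fin d → ℝ) → ℝ → ℝ) : ((Fin d → ℝ) × ℝ) → ℝ :=
  fun p => Real.log (ρ p.1 p.2)

lemma pdx_slice {d : ℕ} {x : Fin d → ℝ} {t : ℝ} {f : (Fin d → ℝ) → ℝ}
    (F : ((Fin d → ℝ) × ℝ) → ℝ) (hf : ∀ y, f y = F (y, t))
    (hF : DifferentiableAt ℝ F (x, t)) (j : Fin d) :
    pdx j f x = fderiv ℝ F (x, t) (es j) := by
  have hfe : f = fun y => F (y, t) := funext hf
  have h1 : HasFDerivAt (fun y : Fin d → ℝ => (y, t))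
      ((ContinuousLinearMap.id ℝ (Fin d → ℝ)).prod (0 : (Fin d → ℝ) →L[ℝ] ℝ)) x :=
    HasFDerivAt.prodMk (hasFDerivAt_id x) (hasFDerivAt_const t x)
  have h2 : HasFDerivAt f
      ((fderiv ℝ F (x, t)).comp
        ((ContinuousLinearMap.id ℝ (Fin d → ℝ)).prod (0 : (Fin d → ℝ) →L[ℝ] ℝ))) x := by
    rw [hfe]; exact hF.hasFDerivAt.comp x h1
  rw [pdx, h2.fderiv]
  simp [es]

lemma deriv_slice {d : ℕ} {x : Fin d → ℝ} {t : ℝ} {f : ℝ → ℝ}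
    (F : ((Fin d → ℝ) × ℝ) → ℝ) (hf : ∀ s, f s = F (x, s))
    (hF : DifferentiableAt ℝ F (x, t)) :
    deriv f t = fderiv ℝ F (x, t) et := by
  have hfe : f = fun s => F (x, s) := funext hf
  have h1 : HasFDerivAt (fun s : ℝ => (x, s))
      ((0 : ℝ →L[ℝ] (Fin d → ℝ)).prod (ContinuousLinearMap.id ℝ ℝ)) t :=
    HasFDerivAt.prodMk (hasFDerivAt_const x t) (hasFDerivAt_id t)
  have h2 : HasDerivAt f
      (((fderiv ℝ F (x, t)).comp
        ((0 : ℝ →L[ℝ] (Fin d → ℝ)).prod (ContinuousLinearMap.id ℝ ℝ))) 1) t := by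
    rw [hfe]; exact (hF.hasFDerivAt.comp t h1).hasDerivAt
  rw [h2.deriv]
  simp [et]

/-- If `(S, ρ)` satisfies the coupled real system, then the current
velocity `v = (ℏ/m) ∇S` and the osmotic velocity `u = (ℏ/(2m)) ∇ log ρ` satisfy the
stochastic-mechanics equations
`∂ₜv = −(1/m)∇V + ⟨u,∇⟩u − ⟨v,∇⟩v + (ℏ/(2m))∇⟨∇,u⟩` and
`∂ₜu = −∇⟨v,u⟩ − (ℏ/(2m))∇⟨∇,v⟩`. -/
theorem coupled_system_implies_stochastic_mechanics
    (d : ℕ) (hd : 1 ≤ d) (ℏ m : ℝ) (hℏ : 0 < ℏ) (hm : 0 < m)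
    (ρ S V : (Fin d → ℝ) → ℝ → ℝ)
    (hρ : ContDiff ℝ (⊤ : ℕ∞) (Function.uncurry ρ))
    (hρpos : ∀ x t, 0 < ρ x t)
    (hS : ContDiff ℝ (⊤ : ℕ∞) (Function.uncurry S))
    (hV : ContDiff ℝ (⊤ : ℕ∞) (Function.uncurry V))
    (hsys1 : ∀ (x : Fin d → ℝ) (t : ℝ),
      -ℏ * deriv (fun s => S x s) t
        = -(ℏ ^ 2 / (2 * m))
            * ((1 / 2) * (∑ j : Fin d,
                  pdx j (fun y => pdx j (fun z => Real.log (ρ z t)) y) x)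
              + (1 / 4) * (∑ j : Fin d, (pdx j (fun y => Real.log (ρ y t)) x) ^ 2)
              - (∑ j : Fin d, (pdx j (fun y => S y t) x) ^ 2))
          + V x t)
    (hsys2 : ∀ (x : Fin d → ℝ) (t : ℝ),
      (ℏ / 2) * deriv (fun s => Real.log (ρ x s)) t
        = -(ℏ ^ 2 / (2 * m))
            * ((∑ j : Fin d, pdx j (fun y => pdx j (fun z => S z t) y) x)
              + (∑ j : Fin d,
                  pdx j (fun y => Real.log (ρ y t)) x * pdx j (fun y => S y t) x))) :
    ∀ (x : Fin d → ℝ) (t : ℝ) (i : Fin d),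
      (deriv (fun s => cvel ℏ m S x s i) t
          = -(1 / m) * pdx i (fun y => V y t) x
            + (∑ j : Fin d, ovel ℏ m ρ x t j * pdx j (fun y => ovel ℏ m ρ y t i) x)
            - (∑ j : Fin d, cvel ℏ m S x t j * pdx j (fun y => cvel ℏ m S y t i) x)
            + (ℏ / (2 * m))
                * pdx i (fun y => ∑ j : Fin d, pdx j (fun z => ovel ℏ m ρ z t j) y) x)
      ∧ (deriv (fun s => ovel ℏ m ρ x s i) t
          = -(pdx i (fun y => ∑ j : Fin d, cvel ℏ m S y t j * ovel ℏ m ρ y t j) x)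
            - (ℏ / (2 * m))
                * pdx i (fun y => ∑ j : Fin d, pdx j (fun z => cvel ℏ m S z t j) y) x) := by
  intro x t i
  have hFL : ContDiff ℝ (⊤ : ℕ∞) (uL ρ) := hρ.log (fun p => (hρpos p.1 p.2).ne')
  -- basic slice conversions
  have hA : ∀ (b : ℝ) (a : Fin d → ℝ) (j : Fin d),
      pdx j (fun y => Real.log (ρ y b)) a = fderiv ℝ (uL ρ) (a, b) (es j) :=
    fun b a j => pdx_slice (uL ρ) (fun _ => rfl) (diffAt hFL _) j
  have hB : ∀ (b : ℝ) (a : Fin d → ℝ) (j : Fin d),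
      pdx j (fun y => S y b) a = fderiv ℝ (Function.uncurry S) (a, b) (es j) :=
    fun b a j => pdx_slice (Function.uncurry S) (fun _ => rfl) (diffAt hS _) j
  have hCL : ∀ (b : ℝ) (a : Fin d → ℝ) (j : Fin d),
      pdx j (fun y => pdx j (fun z => Real.log (ρ z b)) y) a
        = fderiv ℝ (fun q => fderiv ℝ (uL ρ) q (es j)) (a, b) (es j) :=
    fun b a j => pdx_slice (fun q => fderiv ℝ (uL ρ) q (es j))
      (fun y => hA b y j) (diffAt (contDiff_dd hFL (es j)) _) j
  have hCS : ∀ (b : ℝ) (a : Fin d → ℝ) (j : Fin d),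
      pdx j (fun y => pdx j (fun z => S z b) y) a
        = fderiv ℝ (fun q => fderiv ℝ (Function.uncurry S) q (es j)) (a, b) (es j) :=
    fun b a j => pdx_slice (fun q => fderiv ℝ (Function.uncurry S) q (es j))
      (fun y => hB b y j) (diffAt (contDiff_dd hS (es j)) _) j
  have hDtS : ∀ (a : Fin d → ℝ) (b : ℝ),
      deriv (fun s => S a s) b = fderiv ℝ (Function.uncurry S) (a, b) et :=
    fun a b => deriv_slice (Function.uncurry S) (fun _ => rfl) (diffAt hS _)
  have hDtL : ∀ (a : Fin d → ℝ) (b : ℝ),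
      deriv (fun s => Real.log (ρ a s)) b = fderiv ℝ (uL ρ) (a, b) et :=
    fun a b => deriv_slice (uL ρ) (fun _ => rfl) (diffAt hFL _)
  have hovel : ∀ (z : Fin d → ℝ) (b : ℝ) (j : Fin d),
      ovel ℏ m ρ z b j = (ℏ / (2 * m)) * fderiv ℝ (uL ρ) (z, b) (es j) :=
    fun z b j => congrArg (fun w => (ℏ / (2 * m)) * w) (hA b z j)
  have hcvel : ∀ (z : Fin d → ℝ) (b : ℝ) (j : Fin d),
      cvel ℏ m S z b j = (ℏ / m) * fderiv ℝ (Function.uncurry S) (z, b) (es j) :=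
    fun z b j => congrArg (fun w => (ℏ / m) * w) (hB b z j)
  -- the system written for the uncurried functions
  have hfun1 : (fun p : (Fin d → ℝ) × ℝ => -ℏ * fderiv ℝ (Function.uncurry S) p et)
      = (fun p => -(ℏ ^ 2 / (2 * m))
          * ((1 / 2) * (∑ j : Fin d, fderiv ℝ (fun q => fderiv ℝ (uL ρ) q (es j)) p (es j))
            + (1 / 4) * (∑ j : Fin d, (fderiv ℝ (uL ρ) p (es j)) ^ 2)
            - (∑ j : Fin d, (fderiv ℝ (Function.uncurry S) p (es j)) ^ 2))
          + Function.uncurry V p) := by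
    funext p
    obtain ⟨a, b⟩ := p
    have h := hsys1 a b
    rw [hDtS a b] at h
    simp only [hCL] at h
    simp only [hA, hB] at h
    exact h
  have hfun2 : (fun p : (Fin d → ℝ) × ℝ => (ℏ / 2) * fderiv ℝ (uL ρ) p et)
      = (fun p => -(ℏ ^ 2 / (2 * m))
          * ((∑ j : Fin d,
                fderiv ℝ (fun q => fderiv ℝ (Function.uncurry S) q (es j)) p (es j))
            + (∑ j : Fin d,
                fderiv ℝ (uL ρ) p (es j) * fderiv ℝ (Function.uncurry S) p (es j)))) := by
    funext p
    obtain ⟨a, b⟩ := p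
    have h := hsys2 a b
    rw [hDtL a b] at h
    simp only [hCS] at h
    simp only [hA, hB] at h
    exact h
  -- differentiate hfun1 in direction `es i` at (x, t)
  have hE1 := congrArg (fun f : ((Fin d → ℝ) × ℝ) → ℝ => fderiv ℝ f (x, t) (es i)) hfun1
  have hL1 : fderiv ℝ (fun p : (Fin d → ℝ) × ℝ =>
        -ℏ * fderiv ℝ (Function.uncurry S) p et) (x, t) (es i)
      = -ℏ * fderiv ℝ (fun q => fderiv ℝ (Function.uncurry S) q et) (x, t) (es i) :=
    dd_const_mul (diffAt (contDiff_dd hS et) _) (-ℏ) (es i)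
  rw [hL1] at hE1
  -- smoothness of the pieces
  have hW1 : ContDiff ℝ (⊤ : ℕ∞) (fun p : (Fin d → ℝ) × ℝ =>
      ∑ j : Fin d, fderiv ℝ (fun q => fderiv ℝ (uL ρ) q (es j)) p (es j)) :=
    ContDiff.sum (fun j _ => contDiff_dd (contDiff_dd hFL (es j)) (es j))
  have hW2 : ContDiff ℝ (⊤ : ℕ∞) (fun p : (Fin d → ℝ) × ℝ =>
      ∑ j : Fin d, (fderiv ℝ (uL ρ) p (es j)) ^ 2) :=
    ContDiff.sum (fun j _ => (contDiff_dd hFL (es j)).pow 2)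
  have hW3 : ContDiff ℝ (⊤ : ℕ∞) (fun p : (Fin d → ℝ) × ℝ =>
      ∑ j : Fin d, (fderiv ℝ (Function.uncurry S) p (es j)) ^ 2) :=
    ContDiff.sum (fun j _ => (contDiff_dd hS (es j)).pow 2)
  have hWc : ContDiff ℝ (⊤ : ℕ∞) (fun p : (Fin d → ℝ) × ℝ =>
      (1 / 2) * (∑ j : Fin d, fderiv ℝ (fun q => fderiv ℝ (uL ρ) q (es j)) p (es j))
        + (1 / 4) * (∑ j : Fin d, (fderiv ℝ (uL ρ) p (es j)) ^ 2)
        - (∑ j : Fin d, (fderiv ℝ (Function.uncurry S) p (es j)) ^ 2)) :=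
    (((contDiff_const.mul hW1).add (contDiff_const.mul hW2)).sub hW3)
  -- expand the right-hand side of hE1
  have hR1 : fderiv ℝ (fun p : (Fin d → ℝ) × ℝ => -(ℏ ^ 2 / (2 * m))
        * ((1 / 2) * (∑ j : Fin d, fderiv ℝ (fun q => fderiv ℝ (uL ρ) q (es j)) p (es j))
          + (1 / 4) * (∑ j : Fin d, (fderiv ℝ (uL ρ) p (es j)) ^ 2)
          - (∑ j : Fin d, (fderiv ℝ (Function.uncurry S) p (es j)) ^ 2))
        + Function.uncurry V p) (x, t) (es i)
      = -(ℏ ^ 2 / (2 * m))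
          * ((1 / 2) * (∑ j : Fin d, fderiv ℝ
                (fun p => fderiv ℝ (fun q => fderiv ℝ (uL ρ) q (es j)) p (es j)) (x, t) (es i))
            + (1 / 4) * (2 * ∑ j : Fin d, (fderiv ℝ (uL ρ) (x, t) (es j)
                * fderiv ℝ (fun q => fderiv ℝ (uL ρ) q (es j)) (x, t) (es i)))
            - 2 * ∑ j : Fin d, (fderiv ℝ (Function.uncurry S) (x, t) (es j)
                * fderiv ℝ (fun q => fderiv ℝ (Function.uncurry S) q (es j)) (x, t) (es i)))
        + fderiv ℝ (Function.uncurry V) (x, t) (es i) := by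
    rw [dd_add (diffAt (contDiff_const.mul hWc) _) (diffAt hV _) (es i),
        dd_const_mul (diffAt hWc _) (-(ℏ ^ 2 / (2 * m))) (es i),
        dd_sub (diffAt ((contDiff_const.mul hW1).add (contDiff_const.mul hW2)) _)
          (diffAt hW3 _) (es i),
        dd_add (diffAt (contDiff_const.mul hW1) _) (diffAt (contDiff_const.mul hW2) _) (es i),
        dd_const_mul (diffAt hW1 _) (1 / 2) (es i),
        dd_const_mul (diffAt hW2 _) (1 / 4) (es i)]
    have hs1 : fderiv ℝ (fun p : (Fin d → ℝ) × ℝ =>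
          ∑ j : Fin d, fderiv ℝ (fun q => fderiv ℝ (uL ρ) q (es j)) p (es j)) (x, t) (es i)
        = ∑ j : Fin d, fderiv ℝ
            (fun p => fderiv ℝ (fun q => fderiv ℝ (uL ρ) q (es j)) p (es j)) (x, t) (es i) :=
      dd_sum Finset.univ
        (fun j _ => diffAt (contDiff_dd (contDiff_dd hFL (es j)) (es j)) _) (es i)
    have hs2 : fderiv ℝ (fun p : (Fin d → ℝ) × ℝ =>
          ∑ j : Fin d, (fderiv ℝ (uL ρ) p (es j)) ^ 2) (x, t) (es i)
        = ∑ j : Fin d, fderiv ℝ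
            (fun p => (fderiv ℝ (uL ρ) p (es j)) ^ 2) (x, t) (es i) :=
      dd_sum Finset.univ (fun j _ => diffAt ((contDiff_dd hFL (es j)).pow 2) _) (es i)
    have hs3 : fderiv ℝ (fun p : (Fin d → ℝ) × ℝ =>
          ∑ j : Fin d, (fderiv ℝ (Function.uncurry S) p (es j)) ^ 2) (x, t) (es i)
        = ∑ j : Fin d, fderiv ℝ
            (fun p => (fderiv ℝ (Function.uncurry S) p (es j)) ^ 2) (x, t) (es i) :=
      dd_sum Finset.univ (fun j _ => diffAt ((contDiff_dd hS (es j)).pow 2) _) (es i)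
    rw [hs1, hs2, hs3]
    have hq2 : ∀ j : Fin d, fderiv ℝ
          (fun p => (fderiv ℝ (uL ρ) p (es j)) ^ 2) (x, t) (es i)
        = 2 * (fderiv ℝ (uL ρ) (x, t) (es j)
            * fderiv ℝ (fun q => fderiv ℝ (uL ρ) q (es j)) (x, t) (es i)) :=
      fun j => dd_sq (diffAt (contDiff_dd hFL (es j)) _) (es i)
    have hq3 : ∀ j : Fin d, fderiv ℝ
          (fun p => (fderiv ℝ (Function.uncurry S) p (es j)) ^ 2) (x, t) (es i)
        = 2 * (fderiv ℝ (Function.uncurry S) (x, t) (es j)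
            * fderiv ℝ (fun q => fderiv ℝ (Function.uncurry S) q (es j)) (x, t) (es i)) :=
      fun j => dd_sq (diffAt (contDiff_dd hS (es j)) _) (es i)
    simp only [hq2, hq3]
    rw [← Finset.mul_sum, ← Finset.mul_sum]
  rw [hR1] at hE1
  -- differentiate hfun2 in direction `es i` at (x, t)
  have hE2 := congrArg (fun f : ((Fin d → ℝ) × ℝ) → ℝ => fderiv ℝ f (x, t) (es i)) hfun2
  have hL2 : fderiv ℝ (fun p : (Fin d → ℝ) × ℝ =>
        (ℏ / 2) * fderiv ℝ (uL ρ) p et) (x, t) (es i)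
      = (ℏ / 2) * fderiv ℝ (fun q => fderiv ℝ (uL ρ) q et) (x, t) (es i) :=
    dd_const_mul (diffAt (contDiff_dd hFL et) _) (ℏ / 2) (es i)
  rw [hL2] at hE2
  have hU1 : ContDiff ℝ (⊤ : ℕ∞) (fun p : (Fin d → ℝ) × ℝ =>
      ∑ j : Fin d, fderiv ℝ (fun q => fderiv ℝ (Function.uncurry S) q (es j)) p (es j)) :=
    ContDiff.sum (fun j _ => contDiff_dd (contDiff_dd hS (es j)) (es j))
  have hU2 : ContDiff ℝ (⊤ : ℕ∞) (fun p : (Fin d → ℝ) × ℝ =>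
      ∑ j : Fin d, fderiv ℝ (uL ρ) p (es j) * fderiv ℝ (Function.uncurry S) p (es j)) :=
    ContDiff.sum (fun j _ => (contDiff_dd hFL (es j)).mul (contDiff_dd hS (es j)))
  have hR2 : fderiv ℝ (fun p : (Fin d → ℝ) × ℝ => -(ℏ ^ 2 / (2 * m))
        * ((∑ j : Fin d,
              fderiv ℝ (fun q => fderiv ℝ (Function.uncurry S) q (es j)) p (es j))
          + (∑ j : Fin d,
              fderiv ℝ (uL ρ) p (es j) * fderiv ℝ (Function.uncurry S) p (es j)))) (x, t) (es i)
      = -(ℏ ^ 2 / (2 * m))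
          * ((∑ j : Fin d, fderiv ℝ
                (fun p => fderiv ℝ (fun q => fderiv ℝ (Function.uncurry S) q (es j)) p (es j))
                (x, t) (es i))
            + ((∑ j : Fin d, fderiv ℝ (fun q => fderiv ℝ (uL ρ) q (es j)) (x, t) (es i)
                  * fderiv ℝ (Function.uncurry S) (x, t) (es j))
              + (∑ j : Fin d, fderiv ℝ (uL ρ) (x, t) (es j)
                  * fderiv ℝ (fun q => fderiv ℝ (Function.uncurry S) q (es j)) (x, t) (es i)))) := by
    rw [dd_const_mul (diffAt (hU1.add hU2) _) (-(ℏ ^ 2 / (2 * m))) (es i),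
        dd_add (diffAt hU1 _) (diffAt hU2 _) (es i)]
    have hs1 : fderiv ℝ (fun p : (Fin d → ℝ) × ℝ =>
          ∑ j : Fin d,
            fderiv ℝ (fun q => fderiv ℝ (Function.uncurry S) q (es j)) p (es j)) (x, t) (es i)
        = ∑ j : Fin d, fderiv ℝ
            (fun p => fderiv ℝ (fun q => fderiv ℝ (Function.uncurry S) q (es j)) p (es j))
            (x, t) (es i) :=
      dd_sum Finset.univ
        (fun j _ => diffAt (contDiff_dd (contDiff_dd hS (es j)) (es j)) _) (es i)
    have hs2 : fderiv ℝ (fun p : (Fin d → ℝ) × ℝ =>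
          ∑ j : Fin d,
            fderiv ℝ (uL ρ) p (es j) * fderiv ℝ (Function.uncurry S) p (es j)) (x, t) (es i)
        = ∑ j : Fin d, fderiv ℝ
            (fun p => fderiv ℝ (uL ρ) p (es j) * fderiv ℝ (Function.uncurry S) p (es j))
            (x, t) (es i) :=
      dd_sum Finset.univ
        (fun j _ => diffAt ((contDiff_dd hFL (es j)).mul (contDiff_dd hS (es j))) _) (es i)
    rw [hs1, hs2]
    have hq : ∀ j : Fin d, fderiv ℝ
          (fun p => fderiv ℝ (uL ρ) p (es j) * fderiv ℝ (Function.uncurry S) p (es j))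
          (x, t) (es i)
        = fderiv ℝ (fun q => fderiv ℝ (uL ρ) q (es j)) (x, t) (es i)
            * fderiv ℝ (Function.uncurry S) (x, t) (es j)
          + fderiv ℝ (uL ρ) (x, t) (es j)
            * fderiv ℝ (fun q => fderiv ℝ (Function.uncurry S) q (es j)) (x, t) (es i) :=
      fun j => dd_mul (diffAt (contDiff_dd hFL (es j)) _) (diffAt (contDiff_dd hS (es j)) _)
        (es i)
    simp only [hq]
    rw [Finset.sum_add_distrib]
  rw [hR2] at hE2
  -- now convert the goal
  constructor
  · -- first equation
    have G1 : deriv (fun s => cvel ℏ m S x s i) t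
        = (ℏ / m) * fderiv ℝ (fun q => fderiv ℝ (Function.uncurry S) q et) (x, t) (es i) := by
      have g0 : deriv (fun s => cvel ℏ m S x s i) t
          = fderiv ℝ (fun q => (ℏ / m) * fderiv ℝ (Function.uncurry S) q (es i)) (x, t) et :=
        deriv_slice (fun q => (ℏ / m) * fderiv ℝ (Function.uncurry S) q (es i))
          (fun s => hcvel x s i) (diffAt (contDiff_const.mul (contDiff_dd hS (es i))) _)
      rw [g0, dd_const_mul (diffAt (contDiff_dd hS (es i)) _) (ℏ / m) et,
        dd_symm hS (x, t) (es i) et]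
    have GV : pdx i (fun y => V y t) x = fderiv ℝ (Function.uncurry V) (x, t) (es i) :=
      pdx_slice (Function.uncurry V) (fun _ => rfl) (diffAt hV _) i
    have hpdx_ovel : ∀ j : Fin d, pdx j (fun y => ovel ℏ m ρ y t i) x
        = (ℏ / (2 * m)) * fderiv ℝ (fun q => fderiv ℝ (uL ρ) q (es i)) (x, t) (es j) := by
      intro j
      rw [pdx_slice (fun q => (ℏ / (2 * m)) * fderiv ℝ (uL ρ) q (es i))
          (fun y => hovel y t i) (diffAt (contDiff_const.mul (contDiff_dd hFL (es i))) _) j,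
        dd_const_mul (diffAt (contDiff_dd hFL (es i)) _) (ℏ / (2 * m)) (es j)]
    have hpdx_cvel : ∀ j : Fin d, pdx j (fun y => cvel ℏ m S y t i) x
        = (ℏ / m) * fderiv ℝ (fun q => fderiv ℝ (Function.uncurry S) q (es i)) (x, t) (es j) := by
      intro j
      rw [pdx_slice (fun q => (ℏ / m) * fderiv ℝ (Function.uncurry S) q (es i))
          (fun y => hcvel y t i) (diffAt (contDiff_const.mul (contDiff_dd hS (es i))) _) j,
        dd_const_mul (diffAt (contDiff_dd hS (es i)) _) (ℏ / m) (es j)]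
    have G2 : (∑ j : Fin d, ovel ℏ m ρ x t j * pdx j (fun y => ovel ℏ m ρ y t i) x)
        = (ℏ / (2 * m)) * ((ℏ / (2 * m)) * ∑ j : Fin d, (fderiv ℝ (uL ρ) (x, t) (es j)
            * fderiv ℝ (fun q => fderiv ℝ (uL ρ) q (es j)) (x, t) (es i))) := by
      rw [Finset.mul_sum, Finset.mul_sum]
      refine Finset.sum_congr rfl (fun j _ => ?_)
      rw [hovel x t j, hpdx_ovel j, dd_symm hFL (x, t) (es i) (es j)]
      ring
    have G3 : (∑ j : Fin d, cvel ℏ m S x t j * pdx j (fun y => cvel ℏ m S y t i) x)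
        = (ℏ / m) * ((ℏ / m) * ∑ j : Fin d, (fderiv ℝ (Function.uncurry S) (x, t) (es j)
            * fderiv ℝ (fun q => fderiv ℝ (Function.uncurry S) q (es j)) (x, t) (es i))) := by
      rw [Finset.mul_sum, Finset.mul_sum]
      refine Finset.sum_congr rfl (fun j _ => ?_)
      rw [hcvel x t j, hpdx_cvel j, dd_symm hS (x, t) (es i) (es j)]
      ring
    have hinner4 : ∀ (y : Fin d → ℝ) (j : Fin d), pdx j (fun z => ovel ℏ m ρ z t j) y
        = (ℏ / (2 * m)) * fderiv ℝ (fun q => fderiv ℝ (uL ρ) q (es j)) (y, t) (es j) := by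
      intro y j
      rw [pdx_slice (fun q => (ℏ / (2 * m)) * fderiv ℝ (uL ρ) q (es j))
          (fun z => hovel z t j) (diffAt (contDiff_const.mul (contDiff_dd hFL (es j))) _) j,
        dd_const_mul (diffAt (contDiff_dd hFL (es j)) _) (ℏ / (2 * m)) (es j)]
    have G4 : pdx i (fun y => ∑ j : Fin d, pdx j (fun z => ovel ℏ m ρ z t j) y) x
        = (ℏ / (2 * m)) * ∑ j : Fin d, fderiv ℝ
            (fun p => fderiv ℝ (fun q => fderiv ℝ (uL ρ) q (es j)) p (es j)) (x, t) (es i) := by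
      rw [pdx_slice (fun q => ∑ j : Fin d,
            (ℏ / (2 * m)) * fderiv ℝ (fun q' => fderiv ℝ (uL ρ) q' (es j)) q (es j))
          (fun y => Finset.sum_congr rfl (fun j _ => hinner4 y j))
          (diffAt (ContDiff.sum (fun j _ =>
            contDiff_const.mul (contDiff_dd (contDiff_dd hFL (es j)) (es j)))) _) i]
      have hs : fderiv ℝ (fun q : (Fin d → ℝ) × ℝ => ∑ j : Fin d,
            (ℏ / (2 * m)) * fderiv ℝ (fun q' => fderiv ℝ (uL ρ) q' (es j)) q (es j)) (x, t) (es i)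
          = ∑ j : Fin d, fderiv ℝ (fun q => (ℏ / (2 * m))
              * fderiv ℝ (fun q' => fderiv ℝ (uL ρ) q' (es j)) q (es j)) (x, t) (es i) :=
        dd_sum Finset.univ (fun j _ =>
          diffAt (contDiff_const.mul (contDiff_dd (contDiff_dd hFL (es j)) (es j))) _) (es i)
      rw [hs]
      have hc : ∀ j : Fin d, fderiv ℝ (fun q => (ℏ / (2 * m))
            * fderiv ℝ (fun q' => fderiv ℝ (uL ρ) q' (es j)) q (es j)) (x, t) (es i)
          = (ℏ / (2 * m)) * fderiv ℝ
              (fun p => fderiv ℝ (fun q => fderiv ℝ (uL ρ) q (es j)) p (es j)) (x, t) (es i) :=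
        fun j => dd_const_mul (diffAt (contDiff_dd (contDiff_dd hFL (es j)) (es j)) _)
          (ℏ / (2 * m)) (es i)
      simp only [hc]
      rw [← Finset.mul_sum]
    rw [G1, GV, G2, G3, G4]
    linear_combination (-(1 / m)) * hE1
  · -- second equation
    have L2 : deriv (fun s => ovel ℏ m ρ x s i) t
        = (ℏ / (2 * m)) * fderiv ℝ (fun q => fderiv ℝ (uL ρ) q et) (x, t) (es i) := by
      have g0 : deriv (fun s => ovel ℏ m ρ x s i) t
          = fderiv ℝ (fun q => (ℏ / (2 * m)) * fderiv ℝ (uL ρ) q (es i)) (x, t) et :=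
        deriv_slice (fun q => (ℏ / (2 * m)) * fderiv ℝ (uL ρ) q (es i))
          (fun s => hovel x s i) (diffAt (contDiff_const.mul (contDiff_dd hFL (es i))) _)
      rw [g0, dd_const_mul (diffAt (contDiff_dd hFL (es i)) _) (ℏ / (2 * m)) et,
        dd_symm hFL (x, t) (es i) et]
    have T1 : pdx i (fun y => ∑ j : Fin d, cvel ℏ m S y t j * ovel ℏ m ρ y t j) x
        = (ℏ / m) * ((ℏ / (2 * m)) * (∑ j : Fin d,
              fderiv ℝ (fun q => fderiv ℝ (uL ρ) q (es j)) (x, t) (es i)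
                * fderiv ℝ (Function.uncurry S) (x, t) (es j)))
          + (ℏ / m) * ((ℏ / (2 * m)) * (∑ j : Fin d, fderiv ℝ (uL ρ) (x, t) (es j)
                * fderiv ℝ (fun q => fderiv ℝ (Function.uncurry S) q (es j)) (x, t) (es i))) := by
      rw [pdx_slice (fun q => ∑ j : Fin d,
            ((ℏ / m) * fderiv ℝ (Function.uncurry S) q (es j))
              * ((ℏ / (2 * m)) * fderiv ℝ (uL ρ) q (es j)))
          (fun y => Finset.sum_congr rfl (fun j _ => by rw [hcvel y t j, hovel y t j]))
          (diffAt (ContDiff.sum (fun j _ =>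
            (contDiff_const.mul (contDiff_dd hS (es j))).mul
              (contDiff_const.mul (contDiff_dd hFL (es j))))) _) i]
      have hs : fderiv ℝ (fun q : (Fin d → ℝ) × ℝ => ∑ j : Fin d,
            ((ℏ / m) * fderiv ℝ (Function.uncurry S) q (es j))
              * ((ℏ / (2 * m)) * fderiv ℝ (uL ρ) q (es j))) (x, t) (es i)
          = ∑ j : Fin d, fderiv ℝ (fun q =>
              ((ℏ / m) * fderiv ℝ (Function.uncurry S) q (es j))
                * ((ℏ / (2 * m)) * fderiv ℝ (uL ρ) q (es j))) (x, t) (es i) :=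
        dd_sum Finset.univ (fun j _ => diffAt
          ((contDiff_const.mul (contDiff_dd hS (es j))).mul
            (contDiff_const.mul (contDiff_dd hFL (es j)))) _) (es i)
      rw [hs]
      have hq : ∀ j : Fin d, fderiv ℝ (fun q =>
            ((ℏ / m) * fderiv ℝ (Function.uncurry S) q (es j))
              * ((ℏ / (2 * m)) * fderiv ℝ (uL ρ) q (es j))) (x, t) (es i)
          = (ℏ / m) * ((ℏ / (2 * m)) *
                (fderiv ℝ (fun q => fderiv ℝ (uL ρ) q (es j)) (x, t) (es i)
                  * fderiv ℝ (Function.uncurry S) (x, t) (es j)))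
            + (ℏ / m) * ((ℏ / (2 * m)) * (fderiv ℝ (uL ρ) (x, t) (es j)
                  * fderiv ℝ (fun q => fderiv ℝ (Function.uncurry S) q (es j)) (x, t) (es i))) := by
        intro j
        rw [dd_mul (diffAt (contDiff_const.mul (contDiff_dd hS (es j))) _)
            (diffAt (contDiff_const.mul (contDiff_dd hFL (es j))) _) (es i),
          dd_const_mul (diffAt (contDiff_dd hS (es j)) _) (ℏ / m) (es i),
          dd_const_mul (diffAt (contDiff_dd hFL (es j)) _) (ℏ / (2 * m)) (es i),
          dd_symm hS (x, t) (es j) (es i)]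
        ring
      simp only [hq]
      rw [Finset.sum_add_distrib, ← Finset.mul_sum, ← Finset.mul_sum, ← Finset.mul_sum,
        ← Finset.mul_sum]
    have hinner5 : ∀ (y : Fin d → ℝ) (j : Fin d), pdx j (fun z => cvel ℏ m S z t j) y
        = (ℏ / m) * fderiv ℝ (fun q => fderiv ℝ (Function.uncurry S) q (es j)) (y, t) (es j) := by
      intro y j
      rw [pdx_slice (fun q => (ℏ / m) * fderiv ℝ (Function.uncurry S) q (es j))
          (fun z => hcvel z t j) (diffAt (contDiff_const.mul (contDiff_dd hS (es j))) _) j,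
        dd_const_mul (diffAt (contDiff_dd hS (es j)) _) (ℏ / m) (es j)]
    have T2 : pdx i (fun y => ∑ j : Fin d, pdx j (fun z => cvel ℏ m S z t j) y) x
        = (ℏ / m) * ∑ j : Fin d, fderiv ℝ
            (fun p => fderiv ℝ (fun q => fderiv ℝ (Function.uncurry S) q (es j)) p (es j))
            (x, t) (es i) := by
      rw [pdx_slice (fun q => ∑ j : Fin d,
            (ℏ / m) * fderiv ℝ (fun q' => fderiv ℝ (Function.uncurry S) q' (es j)) q (es j))
          (fun y => Finset.sum_congr rfl (fun j _ => hinner5 y j))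
          (diffAt (ContDiff.sum (fun j _ =>
            contDiff_const.mul (contDiff_dd (contDiff_dd hS (es j)) (es j)))) _) i]
      have hs : fderiv ℝ (fun q : (Fin d → ℝ) × ℝ => ∑ j : Fin d,
            (ℏ / m) * fderiv ℝ (fun q' => fderiv ℝ (Function.uncurry S) q' (es j)) q (es j))
            (x, t) (es i)
          = ∑ j : Fin d, fderiv ℝ (fun q => (ℏ / m)
              * fderiv ℝ (fun q' => fderiv ℝ (Function.uncurry S) q' (es j)) q (es j))
              (x, t) (es i) :=
        dd_sum Finset.univ (fun j _ =>
          diffAt (contDiff_const.mul (contDiff_dd (contDiff_dd hS (es j)) (es j))) _) (es i)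
      rw [hs]
      have hc : ∀ j : Fin d, fderiv ℝ (fun q => (ℏ / m)
            * fderiv ℝ (fun q' => fderiv ℝ (Function.uncurry S) q' (es j)) q (es j)) (x, t) (es i)
          = (ℏ / m) * fderiv ℝ
              (fun p => fderiv ℝ (fun q => fderiv ℝ (Function.uncurry S) q (es j)) p (es j))
              (x, t) (es i) :=
        fun j => dd_const_mul (diffAt (contDiff_dd (contDiff_dd hS (es j)) (es j)) _)
          (ℏ / m) (es i)
      simp only [hc]
      rw [← Finset.mul_sum]
    rw [L2, T1, T2]
    linear_combination (1 / m) * hE2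
end
end

section
/- Suppose ψ := √ρ · e^{iS} satisfies the Schrödinger equation iħ ∂_t ψ(x,t) = −(ħ²/(2m)) Δψ(x,t) + V(x,t) ψ(x,t) at every (x,t) ∈ ℝ^d × ℝ. Then the current velocity v := (ħ/m) ∇S and the osmotic velocity u := (ħ/(2m)) ∇ log ρ satisfy, at every (x,t) ∈ ℝ^d × ℝ, the stochastic-mechanics system: ∂_t v = −(1/m) ∇V + ⟨u, ∇⟩u − ⟨v, ∇⟩v + (ħ/(2m)) ∇⟨∇, u⟩ and ∂_t u = −∇⟨v, u⟩ − (ħ/(2m)) ∇⟨∇, v⟩. -/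
noncomputable section

/-- The wave function `ψ = √ρ · e^{iS}`. -/
def psi {d : ℕ} (ρ S : (Fin d → ℝ) → ℝ → ℝ) (x : Fin d → ℝ) (t : ℝ) : ℂ :=
  (Real.sqrt (ρ x t) : ℂ) * Complex.exp (Complex.I * (S x t : ℂ))

/-- The time-dependent Schrödinger equation
`iℏ ∂ₜψ = −(ℏ²/(2m)) Δψ + V ψ` holding at every point `(x, t)`. -/
def SchrodingerEq {d : ℕ} (ℏ m : ℝ) (V : (Fin d → ℝ) → ℝ → ℝ)
    (ψ : (Fin d → ℝ) → ℝ → ℂ) : Prop :=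
  ∀ (x : Fin d → ℝ) (t : ℝ),
    Complex.I * (ℏ : ℂ) * deriv (fun s => ψ x s) t
      = -((ℏ : ℂ) ^ 2 / (2 * (m : ℂ)))
            * (∑ j : Fin d, pdx j (fun y => pdx j (fun z => ψ z t) y) x)
        + (V x t : ℂ) * ψ x t

open Complex

variable {E F : Type*} [NormedAddCommGroup E] [NormedSpace ℝ E]
  [NormedAddCommGroup F] [NormedSpace ℝ F]

/-- Directional derivative. -/
def DD (w : E) (f : E → F) (p : E) : F := fderiv ℝ f p w

lemma DD_contDiff {f : E → F} (hf : ContDiff ℝ (⊤:ℕ∞) f) (w : E) :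
    ContDiff ℝ (⊤:ℕ∞) (DD w f) :=
  (hf.fderiv_right (by simp)).clm_apply contDiff_const

lemma DD_DD {f : E → F} (hf : ContDiff ℝ (⊤:ℕ∞) f) (w u : E) (p : E) :
    DD w (DD u f) p = fderiv ℝ (fderiv ℝ f) p w u := by
  have hdf : ContDiff ℝ (⊤:ℕ∞) (fderiv ℝ f) := hf.fderiv_right (by simp)
  unfold DD
  rw [fderiv_clm_apply ((hdf.differentiable (by simp)).differentiableAt)
    (differentiableAt_const u)]
  simp

lemma DD_comm {f : E → F} (hf : ContDiff ℝ (⊤:ℕ∞) f) (w w' : E) (p : E) :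
    DD w (DD w' f) p = DD w' (DD w f) p := by
  have hdf : ContDiff ℝ (⊤:ℕ∞) (fderiv ℝ f) := hf.fderiv_right (by simp)
  have h1 : ∀ y, HasFDerivAt f (fderiv ℝ f y) y :=
    fun y => (hf.differentiable (by simp) y).hasFDerivAt
  have h2 : HasFDerivAt (fderiv ℝ f) (fderiv ℝ (fderiv ℝ f) p) p :=
    (hdf.differentiable (by simp) p).hasFDerivAt
  rw [DD_DD hf, DD_DD hf]
  exact second_derivative_symmetric h1 h2 w w'

lemma DD_add {f g : E → F} {p : E} (hf : DifferentiableAt ℝ f p)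
    (hg : DifferentiableAt ℝ g p) (w : E) :
    DD w (fun q => f q + g q) p = DD w f p + DD w g p := by
  unfold DD; rw [fderiv_fun_add hf hg]; rfl

lemma DD_sub {f g : E → F} {p : E} (hf : DifferentiableAt ℝ f p)
    (hg : DifferentiableAt ℝ g p) (w : E) :
    DD w (fun q => f q - g q) p = DD w f p - DD w g p := by
  unfold DD; rw [fderiv_fun_sub hf hg]; rfl

lemma DD_mul {𝔸 : Type*} [NormedCommRing 𝔸] [NormedAlgebra ℝ 𝔸] {f g : E → 𝔸} {p : E}
    (hf : DifferentiableAt ℝ f p) (hg : DifferentiableAt ℝ g p) (w : E) :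
    DD w (fun q => f q * g q) p = DD w f p * g p + f p * DD w g p := by
  unfold DD; rw [fderiv_fun_mul hf hg]; simp [smul_eq_mul]; ring

lemma DD_cmul {𝔸 : Type*} [NormedCommRing 𝔸] [NormedAlgebra ℝ 𝔸] {f : E → 𝔸} {p : E}
    (hf : DifferentiableAt ℝ f p) (c : 𝔸) (w : E) :
    DD w (fun q => c * f q) p = c * DD w f p := by
  unfold DD; rw [fderiv_const_mul hf c]; simp

lemma DD_sum {ι : Type*} (s : Finset ι) {f : ι → E → F} {p : E}
    (hf : ∀ i ∈ s, DifferentiableAt ℝ (f i) p) (w : E) :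
    DD w (fun q => ∑ i ∈ s, f i q) p = ∑ i ∈ s, DD w (f i) p := by
  unfold DD; rw [fderiv_fun_sum hf]; simp

lemma DD_const (c : F) (p w : E) : DD w (fun _ => c) p = 0 := by
  unfold DD; simp

lemma DD_div_const {f : E → ℝ} {p : E} (hf : DifferentiableAt ℝ f p) (c : ℝ) (w : E) :
    DD w (fun q => f q / c) p = DD w f p / c := by
  simp only [div_eq_inv_mul]; exact DD_cmul hf _ w

def eX {d : ℕ} (j : Fin d) : (Fin d → ℝ) × ℝ := (Pi.single j 1, 0)
def eT {d : ℕ} : (Fin d → ℝ) × ℝ := (0, 1)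


lemma slice_x {d : ℕ} {X : Type*} [NormedAddCommGroup X] [NormedSpace ℝ X]
    {F : (Fin d → ℝ) × ℝ → X} {x : Fin d → ℝ} {t : ℝ}
    (hF : DifferentiableAt ℝ F (x, t)) (j : Fin d) :
    pdx j (fun y => F (y, t)) x = DD (eX j) F (x, t) := by
  have hι : HasFDerivAt (fun y : Fin d → ℝ => (y, t))
      ((ContinuousLinearMap.id ℝ (Fin d → ℝ)).prod 0) x :=
    HasFDerivAt.prodMk (hasFDerivAt_id x) (hasFDerivAt_const t x)
  have := (hF.hasFDerivAt.comp x hι).fderiv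
  unfold pdx DD
  rw [show (fun y : Fin d → ℝ => F (y, t)) = F ∘ (fun y => (y, t)) from rfl, this]
  simp [eX]

lemma slice_t {d : ℕ} {X : Type*} [NormedAddCommGroup X] [NormedSpace ℝ X]
    {F : (Fin d → ℝ) × ℝ → X} {x : Fin d → ℝ} {t : ℝ}
    (hF : DifferentiableAt ℝ F (x, t)) :
    deriv (fun s => F (x, s)) t = DD eT F (x, t) := by
  have hι : HasDerivAt (fun s : ℝ => ((x, s) : (Fin d → ℝ) × ℝ))
      (((0 : Fin d → ℝ), (1:ℝ))) t :=
    HasDerivAt.prodMk (hasDerivAt_const t x) (hasDerivAt_id t)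
  exact (hF.hasFDerivAt.comp_hasDerivAt t hι).deriv

lemma DD_ofReal {f : E → ℝ} {p : E} (hf : DifferentiableAt ℝ f p) (w : E) :
    DD w (fun q => (f q : ℂ)) p = Complex.ofReal (DD w f p) := by
  unfold DD
  rw [show (fun q => (f q : ℂ)) = Complex.ofRealCLM ∘ f from rfl,
    (Complex.ofRealCLM.hasFDerivAt.comp p hf.hasFDerivAt).fderiv]
  simp

lemma DD_cexp {g : E → ℂ} {p : E} (hg : DifferentiableAt ℝ g p) (w : E) :
    DD w (fun q => Complex.exp (g q)) p = Complex.exp (g p) * DD w g p := by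
  unfold DD
  rw [(hg.hasFDerivAt.cexp).fderiv]
  simp [smul_eq_mul]

def uc {d : ℕ} (f : (Fin d → ℝ) → ℝ → ℝ) : (Fin d → ℝ) × ℝ → ℝ := fun p => f p.1 p.2
def Lg {d : ℕ} (ρ : (Fin d → ℝ) → ℝ → ℝ) : (Fin d → ℝ) × ℝ → ℝ :=
  fun p => Real.log (uc ρ p) / 2
def Psi2 {d : ℕ} (ρ S : (Fin d → ℝ) → ℝ → ℝ) : (Fin d → ℝ) × ℝ → ℂ :=
  fun p => Complex.exp (↑(Lg ρ p) + Complex.I * ↑(uc S p))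
def gj {d : ℕ} (ρ S : (Fin d → ℝ) → ℝ → ℝ) (w : (Fin d → ℝ) × ℝ) :
    (Fin d → ℝ) × ℝ → ℂ :=
  fun p => ↑(DD w (Lg ρ) p) + Complex.I * ↑(DD w (uc S) p)

section main
variable {d : ℕ} {ρ S : (Fin d → ℝ) → ℝ → ℝ}

lemma Lg_contDiff (hρ : ContDiff ℝ (⊤:ℕ∞) (Function.uncurry ρ))
    (hρpos : ∀ x t, 0 < ρ x t) : ContDiff ℝ (⊤:ℕ∞) (Lg ρ) := by
  have h1 : ContDiff ℝ (⊤:ℕ∞) (uc ρ) := hρ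
  exact (h1.log (fun p => (hρpos p.1 p.2).ne')).div_const 2


lemma psi_eq_Psi2 (hρpos : ∀ x t, 0 < ρ x t) (x : Fin d → ℝ) (t : ℝ) :
    psi ρ S x t = Psi2 ρ S (x, t) := by
  unfold psi Psi2 Lg uc
  rw [Complex.exp_add]
  congr 1
  rw [← Complex.ofReal_exp]
  congr 1
  rw [← Real.log_sqrt (hρpos x t).le, Real.exp_log (Real.sqrt_pos.2 (hρpos x t))]

lemma Psi2_contDiff (hρ : ContDiff ℝ (⊤:ℕ∞) (Function.uncurry ρ))
    (hρpos : ∀ x t, 0 < ρ x t) (hS : ContDiff ℝ (⊤:ℕ∞) (Function.uncurry S)) :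
    ContDiff ℝ (⊤:ℕ∞) (Psi2 ρ S) := by
  have hSf : ContDiff ℝ (⊤:ℕ∞) (uc S) := hS
  have hG : ContDiff ℝ (⊤:ℕ∞) (fun p => (↑(Lg ρ p) + Complex.I * ↑(uc S p) : ℂ)) :=
    (Complex.ofRealCLM.contDiff.comp (Lg_contDiff hρ hρpos)).add
      (contDiff_const.mul (Complex.ofRealCLM.contDiff.comp hSf))
  exact Complex.contDiff_exp.comp hG

lemma gj_contDiff (hρ : ContDiff ℝ (⊤:ℕ∞) (Function.uncurry ρ))
    (hρpos : ∀ x t, 0 < ρ x t) (hS : ContDiff ℝ (⊤:ℕ∞) (Function.uncurry S))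
    (w : (Fin d → ℝ) × ℝ) : ContDiff ℝ (⊤:ℕ∞) (gj ρ S w) := by
  have hSf : ContDiff ℝ (⊤:ℕ∞) (uc S) := hS
  exact (Complex.ofRealCLM.contDiff.comp (DD_contDiff (Lg_contDiff hρ hρpos) w)).add
    (contDiff_const.mul (Complex.ofRealCLM.contDiff.comp (DD_contDiff hSf w)))

lemma DD_Psi2 (hρ : ContDiff ℝ (⊤:ℕ∞) (Function.uncurry ρ))
    (hρpos : ∀ x t, 0 < ρ x t) (hS : ContDiff ℝ (⊤:ℕ∞) (Function.uncurry S))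
    (w p : (Fin d → ℝ) × ℝ) :
    DD w (Psi2 ρ S) p = Psi2 ρ S p * gj ρ S w p := by
  have hSf : ContDiff ℝ (⊤:ℕ∞) (uc S) := hS
  have hL := Lg_contDiff hρ hρpos
  have dL : DifferentiableAt ℝ (Lg ρ) p := (hL.differentiable (by simp)).differentiableAt
  have dS : DifferentiableAt ℝ (uc S) p := (hSf.differentiable (by simp)).differentiableAt
  have dLC : DifferentiableAt ℝ (fun q => (↑(Lg ρ q) : ℂ)) p :=
    Complex.ofRealCLM.differentiableAt.comp p dL
  have dSC : DifferentiableAt ℝ (fun q => (↑(uc S q) : ℂ)) p :=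
    Complex.ofRealCLM.differentiableAt.comp p dS
  have dG : DifferentiableAt ℝ (fun q => (↑(Lg ρ q) + Complex.I * ↑(uc S q) : ℂ)) p :=
    dLC.add (dSC.const_mul _)
  have : DD w (Psi2 ρ S) p
      = Complex.exp (↑(Lg ρ p) + Complex.I * ↑(uc S p))
        * DD w (fun q => (↑(Lg ρ q) + Complex.I * ↑(uc S q) : ℂ)) p :=
    DD_cexp dG w
  rw [this, DD_add dLC (dSC.const_mul _) w, DD_cmul dSC Complex.I w, DD_ofReal dL w,
    DD_ofReal dS w]
  rfl

lemma DD_gj (hρ : ContDiff ℝ (⊤:ℕ∞) (Function.uncurry ρ))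
    (hρpos : ∀ x t, 0 < ρ x t) (hS : ContDiff ℝ (⊤:ℕ∞) (Function.uncurry S))
    (w w' p : (Fin d → ℝ) × ℝ) :
    DD w' (gj ρ S w) p
      = ↑(DD w' (DD w (Lg ρ)) p) + Complex.I * ↑(DD w' (DD w (uc S)) p) := by
  have hSf : ContDiff ℝ (⊤:ℕ∞) (uc S) := hS
  have hL := Lg_contDiff hρ hρpos
  have dL : DifferentiableAt ℝ (DD w (Lg ρ)) p :=
    ((DD_contDiff hL w).differentiable (by simp)).differentiableAt
  have dS : DifferentiableAt ℝ (DD w (uc S)) p :=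
    ((DD_contDiff hSf w).differentiable (by simp)).differentiableAt
  have dLC : DifferentiableAt ℝ (fun q => (↑(DD w (Lg ρ) q) : ℂ)) p :=
    Complex.ofRealCLM.differentiableAt.comp p dL
  have dSC : DifferentiableAt ℝ (fun q => (↑(DD w (uc S) q) : ℂ)) p :=
    Complex.ofRealCLM.differentiableAt.comp p dS
  have e0 : DD w' (gj ρ S w) p
      = DD w' (fun q => (↑(DD w (Lg ρ) q) + Complex.I * ↑(DD w (uc S) q) : ℂ)) p := rfl
  rw [e0, DD_add dLC (dSC.const_mul _) w', DD_cmul dSC Complex.I w', DD_ofReal dL w',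
    DD_ofReal dS w']

end main


section madelung
variable {d : ℕ} {ℏ m : ℝ} {ρ S V : (Fin d → ℝ) → ℝ → ℝ}

lemma madelung (hℏ : 0 < ℏ) (hm : 0 < m)
    (hρ : ContDiff ℝ (⊤:ℕ∞) (Function.uncurry ρ))
    (hρpos : ∀ x t, 0 < ρ x t)
    (hS : ContDiff ℝ (⊤:ℕ∞) (Function.uncurry S))
    (hschrod : SchrodingerEq ℏ m V (psi ρ S)) :
    ∀ p : (Fin d → ℝ) × ℝ,
      (DD eT (uc S) p
        = (ℏ/(2*m)) * (∑ j : Fin d,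
            (DD (eX j) (Lg ρ) p * DD (eX j) (Lg ρ) p
              - DD (eX j) (uc S) p * DD (eX j) (uc S) p
              + DD (eX j) (DD (eX j) (Lg ρ)) p)) - uc V p / ℏ)
      ∧ (DD eT (Lg ρ) p
        = -(ℏ/(2*m)) * (∑ j : Fin d,
            (2 * (DD (eX j) (Lg ρ) p * DD (eX j) (uc S) p)
              + DD (eX j) (DD (eX j) (uc S)) p))) := by
  rintro ⟨x, t⟩
  have hSf : ContDiff ℝ (⊤:ℕ∞) (uc S) := hS
  have hL := Lg_contDiff hρ hρpos
  have hΨ := Psi2_contDiff hρ hρpos hS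
  have dΨ : ∀ q, DifferentiableAt ℝ (Psi2 ρ S) q :=
    fun q => (hΨ.differentiable (by simp)).differentiableAt
  have H := hschrod x t
  simp only [psi_eq_Psi2 (S := S) hρpos] at H
  rw [slice_t (dΨ (x, t)), DD_Psi2 hρ hρpos hS eT (x, t)] at H
  have e3 : ∀ j : Fin d, pdx j (fun y => pdx j (fun z => Psi2 ρ S (z, t)) y) x
      = Psi2 ρ S (x, t) * ((gj ρ S (eX j) (x, t))^2
          + DD (eX j) (gj ρ S (eX j)) (x, t)) := by
    intro j
    have i2 : (fun y => pdx j (fun z => Psi2 ρ S (z, t)) y)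
        = fun y => DD (eX j) (Psi2 ρ S) (y, t) := by
      funext y; exact slice_x (dΨ (y, t)) j
    have dDΨ : DifferentiableAt ℝ (DD (eX j) (Psi2 ρ S)) (x, t) :=
      ((DD_contDiff hΨ (eX j)).differentiable (by simp)).differentiableAt
    rw [i2, slice_x dDΨ j]
    have i3 : DD (eX j) (Psi2 ρ S) = fun q => Psi2 ρ S q * gj ρ S (eX j) q :=
      funext fun q => DD_Psi2 hρ hρpos hS (eX j) q
    have dgj : DifferentiableAt ℝ (gj ρ S (eX j)) (x, t) :=
      ((gj_contDiff hρ hρpos hS (eX j)).differentiable (by simp)).differentiableAt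
    rw [i3, DD_mul (dΨ (x,t)) dgj (eX j), DD_Psi2 hρ hρpos hS (eX j) (x, t)]
    ring
  simp only [e3] at H
  rw [← Finset.mul_sum] at H
  have hne : Psi2 ρ S (x, t) ≠ 0 := Complex.exp_ne_zero _
  have H' : Complex.I * ↑ℏ * (gj ρ S eT (x, t))
      = -((ℏ:ℂ)^2/(2*↑m)) * (∑ j : Fin d, ((gj ρ S (eX j) (x, t))^2
          + DD (eX j) (gj ρ S (eX j)) (x, t))) + ↑(V x t) := by
    apply mul_left_cancel₀ hne
    linear_combination H
  simp only [DD_gj hρ hρpos hS] at H'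
  have hsum : (∑ j : Fin d, ((gj ρ S (eX j) (x, t))^2
        + (↑(DD (eX j) (DD (eX j) (Lg ρ)) (x, t))
          + Complex.I * ↑(DD (eX j) (DD (eX j) (uc S)) (x, t)))))
      = ↑(∑ j : Fin d, (DD (eX j) (Lg ρ) (x,t) * DD (eX j) (Lg ρ) (x,t)
            - DD (eX j) (uc S) (x,t) * DD (eX j) (uc S) (x,t)
            + DD (eX j) (DD (eX j) (Lg ρ)) (x,t)))
        + ↑(∑ j : Fin d, (2 * (DD (eX j) (Lg ρ) (x,t) * DD (eX j) (uc S) (x,t))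
            + DD (eX j) (DD (eX j) (uc S)) (x,t))) * Complex.I := by
    rw [Complex.ofReal_sum, Complex.ofReal_sum, Finset.sum_mul, ← Finset.sum_add_distrib]
    apply Finset.sum_congr rfl
    intro j _
    show ((↑(DD (eX j) (Lg ρ) (x,t)) + Complex.I * ↑(DD (eX j) (uc S) (x,t)))^2 + _ : ℂ) = _
    push_cast
    linear_combination (↑(DD (eX j) (uc S) (x,t)) : ℂ)^2 * Complex.I_sq
  rw [hsum] at H'
  have hgt : gj ρ S eT (x, t)
      = ↑(DD eT (Lg ρ) (x,t)) + Complex.I * ↑(DD eT (uc S) (x,t)) := rfl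
  rw [hgt] at H'
  have hc : -((ℏ:ℂ)^2/(2*(m:ℂ))) = ((-(ℏ^2/(2*m)) : ℝ) : ℂ) := by
    push_cast; ring
  rw [hc] at H'
  have hre := congrArg Complex.re H'
  have him := congrArg Complex.im H'
  simp only [Complex.add_re, Complex.add_im, Complex.mul_re, Complex.mul_im,
    Complex.I_re, Complex.I_im, Complex.ofReal_re, Complex.ofReal_im] at hre him
  have hℏ' : ℏ ≠ 0 := hℏ.ne'
  have hm' : m ≠ 0 := hm.ne'
  constructor
  · show DD eT (uc S) (x,t) = _
    simp only [uc]
    field_simp at hre ⊢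
    first
      | linear_combination hre
      | linear_combination -hre
      | linear_combination 2 * m * hre
      | linear_combination (-(2:ℝ)) * m * hre
  · show DD eT (Lg ρ) (x,t) = _
    apply mul_left_cancel₀ hℏ'
    first
      | linear_combination him
      | linear_combination -him
      | linear_combination 2 * m * him
      | linear_combination (-(2:ℝ)) * m * him

end madelung



section translate
variable {d : ℕ} {ℏ m : ℝ} {ρ S V : (Fin d → ℝ) → ℝ → ℝ}

lemma ovel_eq (hρ : ContDiff ℝ (⊤:ℕ∞) (Function.uncurry ρ))
    (hρpos : ∀ x t, 0 < ρ x t) (y : Fin d → ℝ) (s : ℝ) (j : Fin d) :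
    ovel ℏ m ρ y s j = (ℏ/m) * DD (eX j) (Lg ρ) (y, s) := by
  have hlog : ContDiff ℝ (⊤:ℕ∞) (fun p : (Fin d → ℝ) × ℝ => Real.log (uc ρ p)) :=
    (show ContDiff ℝ (⊤:ℕ∞) (uc ρ) from hρ).log (fun p => (hρpos p.1 p.2).ne')
  have dlog : DifferentiableAt ℝ (fun p : (Fin d → ℝ) × ℝ => Real.log (uc ρ p)) (y, s) :=
    (hlog.differentiable (by simp)).differentiableAt
  have h1 : pdx j (fun z => Real.log (ρ z s)) y
      = DD (eX j) (fun p : (Fin d → ℝ) × ℝ => Real.log (uc ρ p)) (y, s) :=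
    slice_x dlog j
  have h2 : DD (eX j) (Lg ρ) (y, s)
      = DD (eX j) (fun p : (Fin d → ℝ) × ℝ => Real.log (uc ρ p)) (y, s) / 2 :=
    DD_div_const dlog 2 (eX j)
  show (ℏ / (2*m)) * pdx j (fun z => Real.log (ρ z s)) y = _
  rw [h1, h2]; ring

lemma cvel_eq (hS : ContDiff ℝ (⊤:ℕ∞) (Function.uncurry S))
    (y : Fin d → ℝ) (s : ℝ) (j : Fin d) :
    cvel ℏ m S y s j = (ℏ/m) * DD (eX j) (uc S) (y, s) := by
  have hSf : ContDiff ℝ (⊤:ℕ∞) (uc S) := hS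
  show (ℏ/m) * pdx j (fun z => S z s) y = _
  rw [show pdx j (fun z => S z s) y = DD (eX j) (uc S) (y, s) from
    slice_x ((hSf.differentiable (by simp)).differentiableAt) j]

lemma pdx_ovel (hρ : ContDiff ℝ (⊤:ℕ∞) (Function.uncurry ρ))
    (hρpos : ∀ x t, 0 < ρ x t) (y : Fin d → ℝ) (s : ℝ) (j i : Fin d) :
    pdx j (fun z => ovel ℏ m ρ z s i) y
      = (ℏ/m) * DD (eX j) (DD (eX i) (Lg ρ)) (y, s) := by
  have hL := Lg_contDiff hρ hρpos
  have ch := DD_contDiff hL (eX i)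
  have e : (fun z => ovel ℏ m ρ z s i)
      = fun z => ((fun p => (ℏ/m) * DD (eX i) (Lg ρ) p) (z, s)) :=
    funext fun z => ovel_eq hρ hρpos z s i
  rw [e, slice_x (((contDiff_const.mul ch).differentiable (by simp)).differentiableAt) j,
    DD_cmul ((ch.differentiable (by simp)).differentiableAt) _ (eX j)]

lemma pdx_cvel (hS : ContDiff ℝ (⊤:ℕ∞) (Function.uncurry S))
    (y : Fin d → ℝ) (s : ℝ) (j i : Fin d) :
    pdx j (fun z => cvel ℏ m S z s i) y
      = (ℏ/m) * DD (eX j) (DD (eX i) (uc S)) (y, s) := by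
  have hSf : ContDiff ℝ (⊤:ℕ∞) (uc S) := hS
  have cb := DD_contDiff hSf (eX i)
  have e : (fun z => cvel ℏ m S z s i)
      = fun z => ((fun p => (ℏ/m) * DD (eX i) (uc S) p) (z, s)) :=
    funext fun z => cvel_eq hS z s i
  rw [e, slice_x (((contDiff_const.mul cb).differentiable (by simp)).differentiableAt) j,
    DD_cmul ((cb.differentiable (by simp)).differentiableAt) _ (eX j)]

lemma deriv_cvel (hS : ContDiff ℝ (⊤:ℕ∞) (Function.uncurry S))
    (x : Fin d → ℝ) (t : ℝ) (i : Fin d) :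
    deriv (fun s => cvel ℏ m S x s i) t = (ℏ/m) * DD eT (DD (eX i) (uc S)) (x, t) := by
  have hSf : ContDiff ℝ (⊤:ℕ∞) (uc S) := hS
  have cb := DD_contDiff hSf (eX i)
  have e : (fun s => cvel ℏ m S x s i)
      = fun s => ((fun p => (ℏ/m) * DD (eX i) (uc S) p) (x, s)) :=
    funext fun s => cvel_eq hS x s i
  rw [e, slice_t (((contDiff_const.mul cb).differentiable (by simp)).differentiableAt),
    DD_cmul ((cb.differentiable (by simp)).differentiableAt) _ eT]

lemma deriv_ovel (hρ : ContDiff ℝ (⊤:ℕ∞) (Function.uncurry ρ))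
    (hρpos : ∀ x t, 0 < ρ x t) (x : Fin d → ℝ) (t : ℝ) (i : Fin d) :
    deriv (fun s => ovel ℏ m ρ x s i) t = (ℏ/m) * DD eT (DD (eX i) (Lg ρ)) (x, t) := by
  have hL := Lg_contDiff hρ hρpos
  have ch := DD_contDiff hL (eX i)
  have e : (fun s => ovel ℏ m ρ x s i)
      = fun s => ((fun p => (ℏ/m) * DD (eX i) (Lg ρ) p) (x, s)) :=
    funext fun s => ovel_eq hρ hρpos x s i
  rw [e, slice_t (((contDiff_const.mul ch).differentiable (by simp)).differentiableAt),
    DD_cmul ((ch.differentiable (by simp)).differentiableAt) _ eT]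

end translate

section expand
variable {d : ℕ} {ℏ m : ℝ} {ρ S V : (Fin d → ℝ) → ℝ → ℝ}

lemma pdx_div_ovel (hρ : ContDiff ℝ (⊤:ℕ∞) (Function.uncurry ρ))
    (hρpos : ∀ x t, 0 < ρ x t) (x : Fin d → ℝ) (t : ℝ) (i : Fin d) :
    pdx i (fun y => ∑ j : Fin d, pdx j (fun z => ovel ℏ m ρ z t j) y) x
      = ∑ j : Fin d, (ℏ/m) * DD (eX i) (DD (eX j) (DD (eX j) (Lg ρ))) (x, t) := by
  have hL := Lg_contDiff hρ hρpos
  have chh : ∀ j : Fin d, ContDiff ℝ (⊤:ℕ∞) (DD (eX j) (DD (eX j) (Lg ρ))) :=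
    fun j => DD_contDiff (DD_contDiff hL (eX j)) (eX j)
  have e : (fun y => ∑ j : Fin d, pdx j (fun z => ovel ℏ m ρ z t j) y)
      = fun y => ((fun p => ∑ j : Fin d, (ℏ/m) * DD (eX j) (DD (eX j) (Lg ρ)) p) (y, t)) := by
    funext y
    exact Finset.sum_congr rfl fun j _ => pdx_ovel hρ hρpos y t j j
  have cF : ContDiff ℝ (⊤:ℕ∞)
      (fun p => ∑ j : Fin d, (ℏ/m) * DD (eX j) (DD (eX j) (Lg ρ)) p) :=
    ContDiff.sum fun j _ => contDiff_const.mul (chh j)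
  rw [e, slice_x ((cF.differentiable (by simp)).differentiableAt) i,
    DD_sum Finset.univ (fun j _ =>
      ((contDiff_const.mul (chh j)).differentiable (by simp)).differentiableAt) (eX i)]
  exact Finset.sum_congr rfl fun j _ =>
    DD_cmul (((chh j).differentiable (by simp)).differentiableAt) _ (eX i)

lemma pdx_div_cvel (hS : ContDiff ℝ (⊤:ℕ∞) (Function.uncurry S))
    (x : Fin d → ℝ) (t : ℝ) (i : Fin d) :
    pdx i (fun y => ∑ j : Fin d, pdx j (fun z => cvel ℏ m S z t j) y) x
      = ∑ j : Fin d, (ℏ/m) * DD (eX i) (DD (eX j) (DD (eX j) (uc S))) (x, t) := by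
  have hSf : ContDiff ℝ (⊤:ℕ∞) (uc S) := hS
  have chh : ∀ j : Fin d, ContDiff ℝ (⊤:ℕ∞) (DD (eX j) (DD (eX j) (uc S))) :=
    fun j => DD_contDiff (DD_contDiff hSf (eX j)) (eX j)
  have e : (fun y => ∑ j : Fin d, pdx j (fun z => cvel ℏ m S z t j) y)
      = fun y => ((fun p => ∑ j : Fin d, (ℏ/m) * DD (eX j) (DD (eX j) (uc S)) p) (y, t)) := by
    funext y
    exact Finset.sum_congr rfl fun j _ => pdx_cvel hS y t j j
  have cF : ContDiff ℝ (⊤:ℕ∞)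
      (fun p => ∑ j : Fin d, (ℏ/m) * DD (eX j) (DD (eX j) (uc S)) p) :=
    ContDiff.sum fun j _ => contDiff_const.mul (chh j)
  rw [e, slice_x ((cF.differentiable (by simp)).differentiableAt) i,
    DD_sum Finset.univ (fun j _ =>
      ((contDiff_const.mul (chh j)).differentiable (by simp)).differentiableAt) (eX i)]
  exact Finset.sum_congr rfl fun j _ =>
    DD_cmul (((chh j).differentiable (by simp)).differentiableAt) _ (eX i)

lemma pdx_vu (hρ : ContDiff ℝ (⊤:ℕ∞) (Function.uncurry ρ))
    (hρpos : ∀ x t, 0 < ρ x t) (hS : ContDiff ℝ (⊤:ℕ∞) (Function.uncurry S))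
    (x : Fin d → ℝ) (t : ℝ) (i : Fin d) :
    pdx i (fun y => ∑ j : Fin d, cvel ℏ m S y t j * ovel ℏ m ρ y t j) x
      = ∑ j : Fin d, ((ℏ/m) * DD (eX j) (DD (eX i) (uc S)) (x,t)
            * ((ℏ/m) * DD (eX j) (Lg ρ) (x,t))
          + (ℏ/m) * DD (eX j) (uc S) (x,t)
            * ((ℏ/m) * DD (eX j) (DD (eX i) (Lg ρ)) (x,t))) := by
  have hSf : ContDiff ℝ (⊤:ℕ∞) (uc S) := hS
  have hL := Lg_contDiff hρ hρpos
  have cb : ∀ j : Fin d, ContDiff ℝ (⊤:ℕ∞) (fun p => (ℏ/m) * DD (eX j) (uc S) p) :=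
    fun j => contDiff_const.mul (DD_contDiff hSf (eX j))
  have ch : ∀ j : Fin d, ContDiff ℝ (⊤:ℕ∞) (fun p => (ℏ/m) * DD (eX j) (Lg ρ) p) :=
    fun j => contDiff_const.mul (DD_contDiff hL (eX j))
  have e : (fun y => ∑ j : Fin d, cvel ℏ m S y t j * ovel ℏ m ρ y t j)
      = fun y => ((fun p => ∑ j : Fin d,
          ((ℏ/m) * DD (eX j) (uc S) p) * ((ℏ/m) * DD (eX j) (Lg ρ) p)) (y, t)) := by
    funext y
    exact Finset.sum_congr rfl fun j _ => by
      rw [cvel_eq hS y t j, ovel_eq hρ hρpos y t j]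
  have cF : ContDiff ℝ (⊤:ℕ∞) (fun p => ∑ j : Fin d,
      ((ℏ/m) * DD (eX j) (uc S) p) * ((ℏ/m) * DD (eX j) (Lg ρ) p)) :=
    ContDiff.sum fun j _ => (cb j).mul (ch j)
  rw [e, slice_x ((cF.differentiable (by simp)).differentiableAt) i,
    DD_sum Finset.univ (fun j _ =>
      (((cb j).mul (ch j)).differentiable (by simp)).differentiableAt) (eX i)]
  refine Finset.sum_congr rfl fun j _ => ?_
  rw [DD_mul (((cb j).differentiable (by simp)).differentiableAt)
    (((ch j).differentiable (by simp)).differentiableAt) (eX i),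
    DD_cmul (((DD_contDiff hSf (eX j)).differentiable (by simp)).differentiableAt) _ (eX i),
    DD_cmul (((DD_contDiff hL (eX j)).differentiable (by simp)).differentiableAt) _ (eX i),
    DD_comm hSf (eX i) (eX j) (x,t), DD_comm hL (eX i) (eX j) (x,t)]

end expand

section madexp
variable {d : ℕ} {ℏ m : ℝ} {ρ S V : (Fin d → ℝ) → ℝ → ℝ}

lemma DD_madelung_re (hℏ : 0 < ℏ) (hm : 0 < m)
    (hρ : ContDiff ℝ (⊤:ℕ∞) (Function.uncurry ρ))
    (hρpos : ∀ x t, 0 < ρ x t)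
    (hS : ContDiff ℝ (⊤:ℕ∞) (Function.uncurry S))
    (hV : ContDiff ℝ (⊤:ℕ∞) (Function.uncurry V))
    (hschrod : SchrodingerEq ℏ m V (psi ρ S)) (x : Fin d → ℝ) (t : ℝ) (i : Fin d) :
    DD eT (DD (eX i) (uc S)) (x,t)
      = (ℏ/(2*m)) * (∑ j : Fin d,
          (2 * (DD (eX j) (Lg ρ) (x,t) * DD (eX j) (DD (eX i) (Lg ρ)) (x,t))
            - 2 * (DD (eX j) (uc S) (x,t) * DD (eX j) (DD (eX i) (uc S)) (x,t))
            + DD (eX i) (DD (eX j) (DD (eX j) (Lg ρ))) (x,t)))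
        - DD (eX i) (uc V) (x,t) / ℏ := by
  have hSf : ContDiff ℝ (⊤:ℕ∞) (uc S) := hS
  have hVf : ContDiff ℝ (⊤:ℕ∞) (uc V) := hV
  have hL := Lg_contDiff hρ hρpos
  have dA : ∀ {f : (Fin d → ℝ) × ℝ → ℝ}, ContDiff ℝ (⊤:ℕ∞) f →
      ∀ q, DifferentiableAt ℝ f q := fun hf q => (hf.differentiable (by simp)).differentiableAt
  rw [DD_comm hSf eT (eX i) (x,t)]
  have MreF : DD eT (uc S) = fun p => ((ℏ/(2*m)) * (∑ j : Fin d,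
      (DD (eX j) (Lg ρ) p * DD (eX j) (Lg ρ) p
        - DD (eX j) (uc S) p * DD (eX j) (uc S) p
        + DD (eX j) (DD (eX j) (Lg ρ)) p)) - uc V p / ℏ) :=
    funext fun p => (madelung hℏ hm hρ hρpos hS hschrod p).1
  rw [MreF]
  have cterm : ∀ j : Fin d, ContDiff ℝ (⊤:ℕ∞) (fun p =>
      DD (eX j) (Lg ρ) p * DD (eX j) (Lg ρ) p
        - DD (eX j) (uc S) p * DD (eX j) (uc S) p
        + DD (eX j) (DD (eX j) (Lg ρ)) p) := fun j =>
    (((DD_contDiff hL (eX j)).mul (DD_contDiff hL (eX j))).sub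
      ((DD_contDiff hSf (eX j)).mul (DD_contDiff hSf (eX j)))).add
      (DD_contDiff (DD_contDiff hL (eX j)) (eX j))
  have cF1 : ContDiff ℝ (⊤:ℕ∞) (fun p => ∑ j : Fin d,
      (DD (eX j) (Lg ρ) p * DD (eX j) (Lg ρ) p
        - DD (eX j) (uc S) p * DD (eX j) (uc S) p
        + DD (eX j) (DD (eX j) (Lg ρ)) p)) := ContDiff.sum fun j _ => cterm j
  have e1 : DD (eX i) (fun p => ((ℏ/(2*m)) * (∑ j : Fin d,
      (DD (eX j) (Lg ρ) p * DD (eX j) (Lg ρ) p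
        - DD (eX j) (uc S) p * DD (eX j) (uc S) p
        + DD (eX j) (DD (eX j) (Lg ρ)) p)) - uc V p / ℏ)) (x,t)
      = (ℏ/(2*m)) * DD (eX i) (fun p => ∑ j : Fin d,
          (DD (eX j) (Lg ρ) p * DD (eX j) (Lg ρ) p
            - DD (eX j) (uc S) p * DD (eX j) (uc S) p
            + DD (eX j) (DD (eX j) (Lg ρ)) p)) (x,t)
        - DD (eX i) (uc V) (x,t) / ℏ := by
    rw [DD_sub (by exact dA (contDiff_const.mul cF1) _) (by exact dA (hVf.div_const ℏ) _) (eX i),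
      DD_cmul (dA cF1 _) _ (eX i), DD_div_const (dA hVf _) ℏ (eX i)]
  rw [e1, DD_sum Finset.univ (fun j _ => dA (cterm j) _) (eX i)]
  have e2 : ∀ j ∈ Finset.univ (α := Fin d), DD (eX i) (fun p =>
      DD (eX j) (Lg ρ) p * DD (eX j) (Lg ρ) p
        - DD (eX j) (uc S) p * DD (eX j) (uc S) p
        + DD (eX j) (DD (eX j) (Lg ρ)) p) (x,t)
      = 2 * (DD (eX j) (Lg ρ) (x,t) * DD (eX j) (DD (eX i) (Lg ρ)) (x,t))
        - 2 * (DD (eX j) (uc S) (x,t) * DD (eX j) (DD (eX i) (uc S)) (x,t))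
        + DD (eX i) (DD (eX j) (DD (eX j) (Lg ρ))) (x,t) := by
    intro j _
    have d1 := dA (DD_contDiff hL (eX j))
    have d2 := dA (DD_contDiff hSf (eX j))
    have d3 := dA (DD_contDiff (DD_contDiff hL (eX j)) (eX j))
    rw [DD_add (by exact ((d1 _).mul (d1 _)).sub ((d2 _).mul (d2 _))) (d3 _) (eX i),
      DD_sub (by exact (d1 _).mul (d1 _)) (by exact (d2 _).mul (d2 _)) (eX i),
      DD_mul (d1 _) (d1 _) (eX i), DD_mul (d2 _) (d2 _) (eX i),
      DD_comm hL (eX i) (eX j) (x,t), DD_comm hSf (eX i) (eX j) (x,t)]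
    ring
  rw [Finset.sum_congr rfl e2]

lemma DD_madelung_im (hℏ : 0 < ℏ) (hm : 0 < m)
    (hρ : ContDiff ℝ (⊤:ℕ∞) (Function.uncurry ρ))
    (hρpos : ∀ x t, 0 < ρ x t)
    (hS : ContDiff ℝ (⊤:ℕ∞) (Function.uncurry S))
    (hschrod : SchrodingerEq ℏ m V (psi ρ S)) (x : Fin d → ℝ) (t : ℝ) (i : Fin d) :
    DD eT (DD (eX i) (Lg ρ)) (x,t)
      = -(ℏ/(2*m)) * (∑ j : Fin d,
          (2 * (DD (eX j) (DD (eX i) (Lg ρ)) (x,t) * DD (eX j) (uc S) (x,t))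
            + 2 * (DD (eX j) (Lg ρ) (x,t) * DD (eX j) (DD (eX i) (uc S)) (x,t))
            + DD (eX i) (DD (eX j) (DD (eX j) (uc S))) (x,t))) := by
  have hSf : ContDiff ℝ (⊤:ℕ∞) (uc S) := hS
  have hL := Lg_contDiff hρ hρpos
  have dA : ∀ {f : (Fin d → ℝ) × ℝ → ℝ}, ContDiff ℝ (⊤:ℕ∞) f →
      ∀ q, DifferentiableAt ℝ f q := fun hf q => (hf.differentiable (by simp)).differentiableAt
  rw [DD_comm hL eT (eX i) (x,t)]
  have MimF : DD eT (Lg ρ) = fun p => (-(ℏ/(2*m)) * (∑ j : Fin d,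
      (2 * (DD (eX j) (Lg ρ) p * DD (eX j) (uc S) p)
        + DD (eX j) (DD (eX j) (uc S)) p))) :=
    funext fun p => (madelung hℏ hm hρ hρpos hS hschrod p).2
  rw [MimF]
  have cterm : ∀ j : Fin d, ContDiff ℝ (⊤:ℕ∞) (fun p =>
      2 * (DD (eX j) (Lg ρ) p * DD (eX j) (uc S) p)
        + DD (eX j) (DD (eX j) (uc S)) p) := fun j =>
    (contDiff_const.mul ((DD_contDiff hL (eX j)).mul (DD_contDiff hSf (eX j)))).add
      (DD_contDiff (DD_contDiff hSf (eX j)) (eX j))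
  have cF1 : ContDiff ℝ (⊤:ℕ∞) (fun p => ∑ j : Fin d,
      (2 * (DD (eX j) (Lg ρ) p * DD (eX j) (uc S) p)
        + DD (eX j) (DD (eX j) (uc S)) p)) := ContDiff.sum fun j _ => cterm j
  have e1 : DD (eX i) (fun p => (-(ℏ/(2*m)) * (∑ j : Fin d,
      (2 * (DD (eX j) (Lg ρ) p * DD (eX j) (uc S) p)
        + DD (eX j) (DD (eX j) (uc S)) p)))) (x,t)
      = -(ℏ/(2*m)) * DD (eX i) (fun p => ∑ j : Fin d,
          (2 * (DD (eX j) (Lg ρ) p * DD (eX j) (uc S) p)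
            + DD (eX j) (DD (eX j) (uc S)) p)) (x,t) := by
    rw [DD_cmul (dA cF1 _) _ (eX i)]
  rw [e1, DD_sum Finset.univ (fun j _ => dA (cterm j) _) (eX i)]
  have e2 : ∀ j ∈ Finset.univ (α := Fin d), DD (eX i) (fun p =>
      2 * (DD (eX j) (Lg ρ) p * DD (eX j) (uc S) p)
        + DD (eX j) (DD (eX j) (uc S)) p) (x,t)
      = 2 * (DD (eX j) (DD (eX i) (Lg ρ)) (x,t) * DD (eX j) (uc S) (x,t))
        + 2 * (DD (eX j) (Lg ρ) (x,t) * DD (eX j) (DD (eX i) (uc S)) (x,t))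
        + DD (eX i) (DD (eX j) (DD (eX j) (uc S))) (x,t) := by
    intro j _
    have d1 := dA (DD_contDiff hL (eX j))
    have d2 := dA (DD_contDiff hSf (eX j))
    have d3 := dA (DD_contDiff (DD_contDiff hSf (eX j)) (eX j))
    rw [DD_add (by exact ((d1 _).mul (d2 _)).const_mul 2) (d3 _) (eX i),
      DD_cmul (by exact (d1 _).mul (d2 _)) 2 (eX i),
      DD_mul (d1 _) (d2 _) (eX i),
      DD_comm hL (eX i) (eX j) (x,t), DD_comm hSf (eX i) (eX j) (x,t)]
    ring
  rw [Finset.sum_congr rfl e2]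

end madexp

lemma sum_pull {d : ℕ} (c : ℝ) (f g : Fin d → ℝ) :
    ∑ j : Fin d, (c * f j * (c * g j)) = c * c * ∑ j : Fin d, f j * g j := by
  rw [Finset.mul_sum]
  exact Finset.sum_congr rfl fun j _ => by ring


/-- If `ψ = √ρ · e^{iS}` satisfies the Schrödinger equation at every
point, then the current velocity `v = (ℏ/m) ∇S` and the osmotic velocity
`u = (ℏ/(2m)) ∇ log ρ` satisfy the stochastic-mechanics system
`∂ₜv = −(1/m)∇V + ⟨u,∇⟩u − ⟨v,∇⟩v + (ℏ/(2m))∇⟨∇,u⟩` and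
`∂ₜu = −∇⟨v,u⟩ − (ℏ/(2m))∇⟨∇,v⟩`. -/
theorem schrodinger_implies_stochastic_mechanics
    (d : ℕ) (hd : 1 ≤ d) (ℏ m : ℝ) (hℏ : 0 < ℏ) (hm : 0 < m)
    (ρ S V : (Fin d → ℝ) → ℝ → ℝ)
    (hρ : ContDiff ℝ (⊤ : ℕ∞) (Function.uncurry ρ))
    (hρpos : ∀ x t, 0 < ρ x t)
    (hS : ContDiff ℝ (⊤ : ℕ∞) (Function.uncurry S))
    (hV : ContDiff ℝ (⊤ : ℕ∞) (Function.uncurry V))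
    (hschrod : SchrodingerEq ℏ m V (psi ρ S)) :
    ∀ (x : Fin d → ℝ) (t : ℝ) (i : Fin d),
      (deriv (fun s => cvel ℏ m S x s i) t
          = -(1 / m) * pdx i (fun y => V y t) x
            + (∑ j : Fin d, ovel ℏ m ρ x t j * pdx j (fun y => ovel ℏ m ρ y t i) x)
            - (∑ j : Fin d, cvel ℏ m S x t j * pdx j (fun y => cvel ℏ m S y t i) x)
            + (ℏ / (2 * m))
                * pdx i (fun y => ∑ j : Fin d, pdx j (fun z => ovel ℏ m ρ z t j) y) x)
      ∧ (deriv (fun s => ovel ℏ m ρ x s i) t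
          = -(pdx i (fun y => ∑ j : Fin d, cvel ℏ m S y t j * ovel ℏ m ρ y t j) x)
            - (ℏ / (2 * m))
                * pdx i (fun y => ∑ j : Fin d, pdx j (fun z => cvel ℏ m S z t j) y) x) := by
  intro x t i
  have hVf : ContDiff ℝ (⊤:ℕ∞) (uc V) := hV
  have hℏ' : ℏ ≠ 0 := hℏ.ne'
  have hm' : m ≠ 0 := hm.ne'
  have hpdxV : pdx i (fun y => V y t) x = DD (eX i) (uc V) (x,t) :=
    slice_x ((hVf.differentiable (by simp)).differentiableAt) i
  have s1 : (∑ j : Fin d, ovel ℏ m ρ x t j * pdx j (fun y => ovel ℏ m ρ y t i) x)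
      = ∑ j : Fin d, ((ℏ/m) * DD (eX j) (Lg ρ) (x,t)
          * ((ℏ/m) * DD (eX j) (DD (eX i) (Lg ρ)) (x,t))) :=
    Finset.sum_congr rfl fun j _ => by
      rw [ovel_eq hρ hρpos x t j, pdx_ovel hρ hρpos x t j i]
  have s2 : (∑ j : Fin d, cvel ℏ m S x t j * pdx j (fun y => cvel ℏ m S y t i) x)
      = ∑ j : Fin d, ((ℏ/m) * DD (eX j) (uc S) (x,t)
          * ((ℏ/m) * DD (eX j) (DD (eX i) (uc S)) (x,t))) :=
    Finset.sum_congr rfl fun j _ => by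
      rw [cvel_eq hS x t j, pdx_cvel hS x t j i]
  constructor
  · rw [deriv_cvel hS x t i, DD_madelung_re hℏ hm hρ hρpos hS hV hschrod x t i,
      hpdxV, s1, s2, pdx_div_ovel hρ hρpos x t i]
    have p1 : (∑ j : Fin d,
        (2 * (DD (eX j) (Lg ρ) (x, t) * DD (eX j) (DD (eX i) (Lg ρ)) (x, t)) -
            2 * (DD (eX j) (uc S) (x, t) * DD (eX j) (DD (eX i) (uc S)) (x, t)) +
          DD (eX i) (DD (eX j) (DD (eX j) (Lg ρ))) (x, t)))
        = 2 * (∑ j : Fin d, DD (eX j) (Lg ρ) (x, t) * DD (eX j) (DD (eX i) (Lg ρ)) (x, t))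
          - 2 * (∑ j : Fin d, DD (eX j) (uc S) (x, t) * DD (eX j) (DD (eX i) (uc S)) (x, t))
          + ∑ j : Fin d, DD (eX i) (DD (eX j) (DD (eX j) (Lg ρ))) (x, t) := by
      rw [Finset.sum_add_distrib, Finset.sum_sub_distrib, ← Finset.mul_sum, ← Finset.mul_sum]
    rw [p1, sum_pull (ℏ/m) (fun j => DD (eX j) (Lg ρ) (x, t))
        (fun j => DD (eX j) (DD (eX i) (Lg ρ)) (x, t)),
      sum_pull (ℏ/m) (fun j => DD (eX j) (uc S) (x, t))
        (fun j => DD (eX j) (DD (eX i) (uc S)) (x, t)),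
      ← Finset.mul_sum]
    field_simp
    ring
  · rw [deriv_ovel hρ hρpos x t i, DD_madelung_im hℏ hm hρ hρpos hS hschrod x t i,
      pdx_vu hρ hρpos hS x t i, pdx_div_cvel hS x t i]
    have q1 : (∑ j : Fin d,
        (2 * (DD (eX j) (DD (eX i) (Lg ρ)) (x, t) * DD (eX j) (uc S) (x, t)) +
            2 * (DD (eX j) (Lg ρ) (x, t) * DD (eX j) (DD (eX i) (uc S)) (x, t)) +
          DD (eX i) (DD (eX j) (DD (eX j) (uc S))) (x, t)))
        = 2 * (∑ j : Fin d, DD (eX j) (DD (eX i) (Lg ρ)) (x, t) * DD (eX j) (uc S) (x, t))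
          + 2 * (∑ j : Fin d, DD (eX j) (Lg ρ) (x, t) * DD (eX j) (DD (eX i) (uc S)) (x, t))
          + ∑ j : Fin d, DD (eX i) (DD (eX j) (DD (eX j) (uc S))) (x, t) := by
      rw [Finset.sum_add_distrib, Finset.sum_add_distrib, ← Finset.mul_sum, ← Finset.mul_sum]
    have q2 : (∑ j : Fin d, ((ℏ/m) * DD (eX j) (DD (eX i) (uc S)) (x, t)
          * ((ℏ/m) * DD (eX j) (Lg ρ) (x, t))
        + (ℏ/m) * DD (eX j) (uc S) (x, t)
          * ((ℏ/m) * DD (eX j) (DD (eX i) (Lg ρ)) (x, t))))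
        = (ℏ/m) * (ℏ/m) * (∑ j : Fin d, DD (eX j) (Lg ρ) (x, t)
              * DD (eX j) (DD (eX i) (uc S)) (x, t))
          + (ℏ/m) * (ℏ/m) * (∑ j : Fin d, DD (eX j) (DD (eX i) (Lg ρ)) (x, t)
              * DD (eX j) (uc S) (x, t)) := by
      rw [show (∑ j : Fin d, ((ℏ/m) * DD (eX j) (DD (eX i) (uc S)) (x, t)
            * ((ℏ/m) * DD (eX j) (Lg ρ) (x, t))
          + (ℏ/m) * DD (eX j) (uc S) (x, t)
            * ((ℏ/m) * DD (eX j) (DD (eX i) (Lg ρ)) (x, t))))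
          = ∑ j : Fin d, ((ℏ/m) * (ℏ/m) * (DD (eX j) (Lg ρ) (x, t)
                * DD (eX j) (DD (eX i) (uc S)) (x, t))
              + (ℏ/m) * (ℏ/m) * (DD (eX j) (DD (eX i) (Lg ρ)) (x, t)
                * DD (eX j) (uc S) (x, t)))
          from Finset.sum_congr rfl fun j _ => by ring,
        Finset.sum_add_distrib, ← Finset.mul_sum, ← Finset.mul_sum]
    rw [q1, q2, ← Finset.mul_sum]
    field_simp
    ring
end
end

section
/- Suppose ψ := √ρ · e^{iS} satisfies the Schrödinger equation iħ ∂_t ψ(x,t) = −(ħ²/(2m)) Δψ(x,t) + V(x,t) ψ(x,t) at every (x,t) ∈ ℝ^d × ℝ. Define the current velocity v := (ħ/m) ∇S and the osmotic velocity u := (ħ/(2m)) ∇ log ρ. Then for every real ν ≥ 0 the quantum density ρ = |ψ|² satisfies, at every (x,t), the Fokker–Planck equation ∂_t ρ = −⟨∇, (v + ν u) ρ⟩ + (ν ħ/(2m)) Δρ of the Nelson diffusion dX(t) = (v + νu)(X(t),t) dt + √(νħ/m) dW(t). -/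
noncomputable section

section aux
variable {d : ℕ} {E : Type*} [NormedAddCommGroup E] [NormedSpace ℝ E]

lemma pdx_eq {f : (Fin d → ℝ) → E} {L : (Fin d → ℝ) →L[ℝ] E} {x} (j : Fin d)
    (h : HasFDerivAt f L x) : pdx j f x = L (Pi.single j 1) := by
  rw [pdx, h.fderiv]

lemma pdx_congr {f g : (Fin d → ℝ) → E} (j : Fin d) (h : ∀ y, f y = g y) (x) :
    pdx j f x = pdx j g x := by
  have : f = g := funext h
  rw [pdx, pdx, this]

lemma contDiff_pdx {f : (Fin d → ℝ) → E} (hf : ContDiff ℝ (⊤:ℕ∞) f) (j : Fin d) :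
    ContDiff ℝ (⊤:ℕ∞) (fun y => pdx j f y) := by
  have h1 : ContDiff ℝ (⊤:ℕ∞) (fderiv ℝ f) :=
    hf.fderiv_right (le_of_eq ENat.coe_top_add_one)
  exact h1.clm_apply contDiff_const

lemma diff_of_top {F : Type*} [NormedAddCommGroup F] [NormedSpace ℝ F]
    {f : F → E} (hf : ContDiff ℝ (⊤:ℕ∞) f) : Differentiable ℝ f :=
  hf.differentiable (by simp)

lemma pdx_mul {𝔸 : Type*} [NormedCommRing 𝔸] [NormedAlgebra ℝ 𝔸]
    {f g : (Fin d → ℝ) → 𝔸} {x} (j : Fin d)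
    (hf : DifferentiableAt ℝ f x) (hg : DifferentiableAt ℝ g x) :
    pdx j (fun y => f y * g y) x = pdx j f x * g x + f x * pdx j g x := by
  rw [pdx, fderiv_fun_mul hf hg]
  simp [pdx]; ring

lemma pdx_add {f g : (Fin d → ℝ) → E} {x} (j : Fin d)
    (hf : DifferentiableAt ℝ f x) (hg : DifferentiableAt ℝ g x) :
    pdx j (fun y => f y + g y) x = pdx j f x + pdx j g x := by
  rw [pdx, fderiv_fun_add hf hg]; simp [pdx]

lemma pdx_const_mul {𝔸 : Type*} [NormedCommRing 𝔸] [NormedAlgebra ℝ 𝔸]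
    {f : (Fin d → ℝ) → 𝔸} {x} (c : 𝔸) (j : Fin d)
    (hf : DifferentiableAt ℝ f x) :
    pdx j (fun y => c * f y) x = c * pdx j f x := by
  rw [pdx, fderiv_const_mul hf]; simp [pdx]

lemma pdx_ofReal {f : (Fin d → ℝ) → ℝ} {x} (j : Fin d) (hf : DifferentiableAt ℝ f x) :
    pdx j (fun y => (f y : ℂ)) x = ((pdx j f x : ℝ) : ℂ) := by
  have h : HasFDerivAt (fun y => ((f y : ℝ) : ℂ))
      (Complex.ofRealCLM.comp (fderiv ℝ f x)) x :=
    Complex.ofRealCLM.hasFDerivAt.comp x hf.hasFDerivAt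
  rw [pdx_eq j h]
  simp [pdx]

lemma pdx_cexp {f : (Fin d → ℝ) → ℂ} {x} (j : Fin d) (hf : DifferentiableAt ℝ f x) :
    pdx j (fun y => Complex.exp (f y)) x = Complex.exp (f x) * pdx j f x := by
  rw [pdx_eq j hf.hasFDerivAt.cexp]
  simp [pdx]

lemma diffAt_ofReal {f : (Fin d → ℝ) → ℝ} {x} (hf : DifferentiableAt ℝ f x) :
    DifferentiableAt ℝ (fun y => ((f y : ℝ) : ℂ)) x :=
  Complex.ofRealCLM.differentiableAt.comp x hf

/-- First spatial derivative of ψ. -/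
lemma psi_pdx {ρ S : (Fin d → ℝ) → ℝ → ℝ} {t : ℝ}
    (hf : Differentiable ℝ (fun z => Real.sqrt (ρ z t)))
    (hs : Differentiable ℝ (fun z => S z t)) (j : Fin d) (y : Fin d → ℝ) :
    pdx j (fun z => psi ρ S z t) y
      = (((pdx j (fun z => Real.sqrt (ρ z t)) y : ℝ) : ℂ)
          + Complex.I * (Real.sqrt (ρ y t) : ℂ) * ((pdx j (fun z => S z t) y : ℝ) : ℂ))
        * Complex.exp (Complex.I * (S y t : ℂ)) := by
  have h1 : HasFDerivAt (fun z => Real.sqrt (ρ z t))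
      (fderiv ℝ (fun z => Real.sqrt (ρ z t)) y) y := (hf y).hasFDerivAt
  have h2 : HasFDerivAt (fun z => S z t) (fderiv ℝ (fun z => S z t) y) y :=
    (hs y).hasFDerivAt
  have hc1 : HasFDerivAt (fun z => ((Real.sqrt (ρ z t) : ℝ) : ℂ))
      (Complex.ofRealCLM.comp (fderiv ℝ (fun z => Real.sqrt (ρ z t)) y)) y :=
    Complex.ofRealCLM.hasFDerivAt.comp y h1
  have hc2 : HasFDerivAt (fun z => ((S z t : ℝ) : ℂ))
      (Complex.ofRealCLM.comp (fderiv ℝ (fun z => S z t) y)) y :=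
    Complex.ofRealCLM.hasFDerivAt.comp y h2
  have h3 := (hc2.const_mul Complex.I).cexp
  have h4 := hc1.fun_mul h3
  have h5 : pdx j (fun z => psi ρ S z t) y = pdx j
      (fun z => ((Real.sqrt (ρ z t) : ℝ) : ℂ) * Complex.exp (Complex.I * (S z t : ℂ))) y :=
    pdx_congr j (fun z => rfl) y
  rw [h5, pdx_eq j h4]
  simp only [ContinuousLinearMap.add_apply, ContinuousLinearMap.smul_apply,
    ContinuousLinearMap.coe_comp', Function.comp_apply, Complex.ofRealCLM_apply,
    smul_eq_mul]
  simp only [pdx]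
  ring
end aux

/-- Second spatial derivative of ψ. -/
lemma psi_pdx2 {d : ℕ} {ρ S : (Fin d → ℝ) → ℝ → ℝ} {t : ℝ}
    (hfx : ContDiff ℝ (⊤:ℕ∞) (fun z => Real.sqrt (ρ z t)))
    (hSx : ContDiff ℝ (⊤:ℕ∞) (fun z => S z t)) (j : Fin d) (x : Fin d → ℝ) :
    pdx j (fun y => pdx j (fun z => psi ρ S z t) y) x
      = (((pdx j (fun y => pdx j (fun z => Real.sqrt (ρ z t)) y) x : ℝ) : ℂ)
          + 2 * Complex.I * ((pdx j (fun z => Real.sqrt (ρ z t)) x : ℝ) : ℂ)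
              * ((pdx j (fun z => S z t) x : ℝ) : ℂ)
          + Complex.I * (Real.sqrt (ρ x t) : ℂ)
              * ((pdx j (fun y => pdx j (fun z => S z t) y) x : ℝ) : ℂ)
          - (Real.sqrt (ρ x t) : ℂ) * ((pdx j (fun z => S z t) x : ℝ) : ℂ) ^ 2)
        * Complex.exp (Complex.I * (S x t : ℂ)) := by
  have df : Differentiable ℝ (fun z => Real.sqrt (ρ z t)) := diff_of_top hfx
  have ds : Differentiable ℝ (fun z => S z t) := diff_of_top hSx
  have dAf : Differentiable ℝ (fun y => pdx j (fun z => Real.sqrt (ρ z t)) y) :=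
    diff_of_top (contDiff_pdx hfx j)
  have dAs : Differentiable ℝ (fun y => pdx j (fun z => S z t) y) :=
    diff_of_top (contDiff_pdx hSx j)
  have hP : DifferentiableAt ℝ (fun y => ((pdx j (fun z => Real.sqrt (ρ z t)) y : ℝ) : ℂ)
      + Complex.I * ((Real.sqrt (ρ y t) : ℝ) : ℂ) * ((pdx j (fun z => S z t) y : ℝ) : ℂ)) x :=
    (diffAt_ofReal (dAf x)).add
      (((diffAt_ofReal (df x)).const_mul Complex.I).mul (diffAt_ofReal (dAs x)))
  have hQ : DifferentiableAt ℝ (fun y => Complex.exp (Complex.I * ((S y t : ℝ) : ℂ))) x :=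
    ((diffAt_ofReal (ds x)).const_mul Complex.I).cexp
  rw [pdx_congr j (psi_pdx df ds j) x]
  rw [pdx_mul j hP hQ]
  rw [pdx_add j (diffAt_ofReal (dAf x))
    (((diffAt_ofReal (df x)).const_mul Complex.I).fun_mul (diffAt_ofReal (dAs x)))]
  rw [pdx_mul j ((diffAt_ofReal (df x)).const_mul Complex.I) (diffAt_ofReal (dAs x))]
  rw [pdx_const_mul Complex.I j (diffAt_ofReal (df x))]
  rw [pdx_cexp j ((diffAt_ofReal (ds x)).const_mul Complex.I)]
  rw [pdx_const_mul Complex.I j (diffAt_ofReal (ds x))]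
  rw [pdx_ofReal j (dAf x), pdx_ofReal j (df x), pdx_ofReal j (dAs x), pdx_ofReal j (ds x)]
  linear_combination (((pdx j (fun z => S z t) x : ℝ) : ℂ) ^ 2 * (Real.sqrt (ρ x t) : ℂ)
    * Complex.exp (Complex.I * (S x t : ℂ))) * Complex.I_sq

/-- Time derivative of ψ. -/
lemma psi_dt {d : ℕ} {ρ S : (Fin d → ℝ) → ℝ → ℝ} {x : Fin d → ℝ} {t : ℝ}
    (h1 : DifferentiableAt ℝ (fun s => ρ x s) t) (hpos : 0 < ρ x t)
    (h2 : DifferentiableAt ℝ (fun s => S x s) t) :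
    deriv (fun s => psi ρ S x s) t
      = (((deriv (fun s => Real.sqrt (ρ x s)) t : ℝ) : ℂ)
          + Complex.I * (Real.sqrt (ρ x t) : ℂ) * ((deriv (fun s => S x s) t : ℝ) : ℂ))
        * Complex.exp (Complex.I * (S x t : ℂ)) := by
  have hsq : DifferentiableAt ℝ (fun s => Real.sqrt (ρ x s)) t :=
    (h1.hasDerivAt.sqrt (ne_of_gt hpos)).differentiableAt
  have hTf : HasDerivAt (fun s => Real.sqrt (ρ x s))
      (deriv (fun s => Real.sqrt (ρ x s)) t) t := hsq.hasDerivAt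
  have hTs : HasDerivAt (fun s => S x s) (deriv (fun s => S x s) t) t := h2.hasDerivAt
  have h3 := ((hTs.ofReal_comp).const_mul Complex.I).cexp
  have h4 := (hTf.ofReal_comp).fun_mul h3
  have h5 : deriv (fun s => psi ρ S x s) t
      = deriv (fun s => ((Real.sqrt (ρ x s) : ℝ) : ℂ)
          * Complex.exp (Complex.I * ((S x s : ℝ) : ℂ))) t := rfl
  rw [h5, h4.deriv]; ring


/-- If `ψ = √ρ · e^{iS}` satisfies the Schrödinger equation at every
point, then for every `ν ≥ 0` the quantum density `ρ = |ψ|²` satisfies the Fokker–Planck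
equation `∂ₜρ = −⟨∇, (v + ν u) ρ⟩ + (νℏ/(2m)) Δρ` of the Nelson diffusion, where
`v = (ℏ/m) ∇S` and `u = (ℏ/(2m)) ∇ log ρ`. -/
theorem schrodinger_implies_fokker_planck
    (d : ℕ) (hd : 1 ≤ d) (ℏ m : ℝ) (hℏ : 0 < ℏ) (hm : 0 < m)
    (ρ S V : (Fin d → ℝ) → ℝ → ℝ)
    (hρ : ContDiff ℝ (⊤ : ℕ∞) (Function.uncurry ρ))
    (hρpos : ∀ x t, 0 < ρ x t)
    (hS : ContDiff ℝ (⊤ : ℕ∞) (Function.uncurry S))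
    (hV : ContDiff ℝ (⊤ : ℕ∞) (Function.uncurry V))
    (hschrod : SchrodingerEq ℏ m V (psi ρ S)) :
    ∀ ν : ℝ, 0 ≤ ν →
      ∀ (x : Fin d → ℝ) (t : ℝ),
        deriv (fun s => ρ x s) t
          = -(∑ j : Fin d,
                pdx j (fun y => (cvel ℏ m S y t j + ν * ovel ℏ m ρ y t j) * ρ y t) x)
            + (ν * ℏ / (2 * m))
                * (∑ j : Fin d, pdx j (fun y => pdx j (fun z => ρ z t) y) x) := by
  intro ν hν x t
  -- slice smoothness
  have hρxs : ∀ s : ℝ, ContDiff ℝ (⊤:ℕ∞) (fun y => ρ y s) :=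
    fun s => hρ.comp (contDiff_id.prodMk contDiff_const)
  have hSxs : ∀ s : ℝ, ContDiff ℝ (⊤:ℕ∞) (fun y => S y s) :=
    fun s => hS.comp (contDiff_id.prodMk contDiff_const)
  have hρts : ContDiff ℝ (⊤:ℕ∞) (fun s => ρ x s) := hρ.comp (contDiff_const.prodMk contDiff_id)
  have hSts : ContDiff ℝ (⊤:ℕ∞) (fun s => S x s) := hS.comp (contDiff_const.prodMk contDiff_id)
  have hfx : ContDiff ℝ (⊤:ℕ∞) (fun y => Real.sqrt (ρ y t)) := by
    rw [contDiff_iff_contDiffAt]; intro y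
    exact (Real.contDiffAt_sqrt (ne_of_gt (hρpos y t))).comp y (hρxs t).contDiffAt
  have dρx : Differentiable ℝ (fun z => ρ z t) := diff_of_top (hρxs t)
  have dfxd : Differentiable ℝ (fun z => Real.sqrt (ρ z t)) := diff_of_top hfx
  have dSx : Differentiable ℝ (fun z => S z t) := diff_of_top (hSxs t)
  -- Schrodinger extraction
  have hsch := hschrod x t
  rw [psi_dt ((diff_of_top hρts) t) (hρpos x t) ((diff_of_top hSts) t)] at hsch
  simp only [psi_pdx2 hfx (hSxs t)] at hsch
  simp only [psi] at hsch
  rw [← Finset.sum_mul] at hsch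
  have hE : Complex.exp (Complex.I * (S x t : ℂ)) ≠ 0 := Complex.exp_ne_zero _
  have key : (Complex.I * (ℏ:ℂ)
        * (((deriv (fun s => Real.sqrt (ρ x s)) t : ℝ) : ℂ)
            + Complex.I * (Real.sqrt (ρ x t) : ℂ) * ((deriv (fun s => S x s) t : ℝ) : ℂ))
      + ((ℏ^2/(2*m) : ℝ) : ℂ)
          * (∑ j : Fin d,
              (((pdx j (fun y => pdx j (fun z => Real.sqrt (ρ z t)) y) x : ℝ) : ℂ)
                + 2 * Complex.I * ((pdx j (fun z => Real.sqrt (ρ z t)) x : ℝ) : ℂ)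
                    * ((pdx j (fun z => S z t) x : ℝ) : ℂ)
                + Complex.I * (Real.sqrt (ρ x t) : ℂ)
                    * ((pdx j (fun y => pdx j (fun z => S z t) y) x : ℝ) : ℂ)
                - (Real.sqrt (ρ x t) : ℂ) * ((pdx j (fun z => S z t) x : ℝ) : ℂ) ^ 2))
      - ((V x t : ℝ) : ℂ) * ((Real.sqrt (ρ x t) : ℝ) : ℂ))
      * Complex.exp (Complex.I * (S x t : ℂ)) = 0 := by
    push_cast
    linear_combination hsch
  have key2 := (mul_eq_zero.mp key).resolve_right hE
  have hz : (∑ j : Fin d,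
              (((pdx j (fun y => pdx j (fun z => Real.sqrt (ρ z t)) y) x : ℝ) : ℂ)
                + 2 * Complex.I * ((pdx j (fun z => Real.sqrt (ρ z t)) x : ℝ) : ℂ)
                    * ((pdx j (fun z => S z t) x : ℝ) : ℂ)
                + Complex.I * (Real.sqrt (ρ x t) : ℂ)
                    * ((pdx j (fun y => pdx j (fun z => S z t) y) x : ℝ) : ℂ)
                - (Real.sqrt (ρ x t) : ℂ) * ((pdx j (fun z => S z t) x : ℝ) : ℂ) ^ 2))
      = ((∑ j : Fin d, (pdx j (fun y => pdx j (fun z => Real.sqrt (ρ z t)) y) x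
            - Real.sqrt (ρ x t) * (pdx j (fun z => S z t) x) ^ 2) : ℝ) : ℂ)
        + ((∑ j : Fin d, (2 * pdx j (fun z => Real.sqrt (ρ z t)) x * pdx j (fun z => S z t) x
            + Real.sqrt (ρ x t) * pdx j (fun y => pdx j (fun z => S z t) y) x) : ℝ) : ℂ)
          * Complex.I := by
    push_cast
    rw [Finset.sum_mul, ← Finset.sum_add_distrib]
    exact Finset.sum_congr rfl (fun j _ => by ring)
  rw [hz] at key2
  have him : ℏ * deriv (fun s => Real.sqrt (ρ x s)) t
      + (ℏ^2/(2*m)) * (∑ j : Fin d, (2 * pdx j (fun z => Real.sqrt (ρ z t)) x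
            * pdx j (fun z => S z t) x
          + Real.sqrt (ρ x t) * pdx j (fun y => pdx j (fun z => S z t) y) x)) = 0 := by
    have h := congrArg Complex.im key2
    simp only [Complex.add_im, Complex.sub_im, Complex.mul_im, Complex.mul_re,
      Complex.add_re, Complex.sub_re,
      Complex.I_re, Complex.I_im, Complex.ofReal_re, Complex.ofReal_im, Complex.zero_im] at h
    linear_combination h
  -- real identities
  have hρA : ∀ (j : Fin d) (y), pdx j (fun z => ρ z t) y
      = 2 * Real.sqrt (ρ y t) * pdx j (fun z => Real.sqrt (ρ z t)) y := by
    intro j y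
    rw [pdx_congr j (fun z => (Real.mul_self_sqrt (hρpos z t).le).symm) y,
      pdx_mul j (dfxd y) (dfxd y)]
    ring
  have hlog : ∀ (j : Fin d) (y : Fin d → ℝ), pdx j (fun z => Real.log (ρ z t)) y
      = pdx j (fun z => ρ z t) y / ρ y t := by
    intro j y
    have h := ((dρx y).hasFDerivAt).log (ne_of_gt (hρpos y t))
    rw [pdx_eq j h]
    simp [pdx, div_eq_inv_mul]
  have hterm : ∀ j : Fin d,
      pdx j (fun y => (cvel ℏ m S y t j + ν * ovel ℏ m ρ y t j) * ρ y t) x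
      = (ℏ/m) * (pdx j (fun y => pdx j (fun z => S z t) y) x * ρ x t
          + pdx j (fun z => S z t) x * pdx j (fun z => ρ z t) x)
        + (ν * (ℏ/(2*m))) * pdx j (fun y => pdx j (fun z => ρ z t) y) x := by
    intro j
    have hfun : ∀ y, (cvel ℏ m S y t j + ν * ovel ℏ m ρ y t j) * ρ y t
        = (ℏ/m) * (pdx j (fun z => S z t) y * ρ y t)
          + (ν * (ℏ/(2*m))) * pdx j (fun z => ρ z t) y := by
      intro y
      rw [cvel, ovel, hlog j y]
      field_simp [(hρpos y t).ne', hm.ne']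
    rw [pdx_congr j hfun x]
    rw [pdx_add j
      (((diff_of_top (contDiff_pdx (hSxs t) j) x).fun_mul (dρx x)).const_mul (ℏ/m))
      ((diff_of_top (contDiff_pdx (hρxs t) j) x).const_mul (ν*(ℏ/(2*m))))]
    rw [pdx_const_mul (ℏ/m) j ((diff_of_top (contDiff_pdx (hSxs t) j) x).fun_mul (dρx x))]
    rw [pdx_const_mul (ν*(ℏ/(2*m))) j (diff_of_top (contDiff_pdx (hρxs t) j) x)]
    rw [pdx_mul j (diff_of_top (contDiff_pdx (hSxs t) j) x) (dρx x)]
  have hdt : deriv (fun s => ρ x s) t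
      = 2 * Real.sqrt (ρ x t) * deriv (fun s => Real.sqrt (ρ x s)) t := by
    have hsq : DifferentiableAt ℝ (fun s => Real.sqrt (ρ x s)) t :=
      ((((diff_of_top hρts) t).hasDerivAt.sqrt (ne_of_gt (hρpos x t)))).differentiableAt
    have h : (fun s => ρ x s) = fun s => Real.sqrt (ρ x s) * Real.sqrt (ρ x s) :=
      funext fun s => (Real.mul_self_sqrt (hρpos x s).le).symm
    rw [h, deriv_fun_mul hsq hsq]; ring
  rw [hdt]
  simp only [hterm]
  rw [Finset.sum_add_distrib]
  have hs2 : (∑ j : Fin d, (ℏ/m) * (pdx j (fun y => pdx j (fun z => S z t) y) x * ρ x t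
          + pdx j (fun z => S z t) x * pdx j (fun z => ρ z t) x))
      = (ℏ * Real.sqrt (ρ x t) / m) * (∑ j : Fin d,
          (2 * pdx j (fun z => Real.sqrt (ρ z t)) x * pdx j (fun z => S z t) x
            + Real.sqrt (ρ x t) * pdx j (fun y => pdx j (fun z => S z t) y) x)) := by
    rw [Finset.mul_sum]
    refine Finset.sum_congr rfl (fun j _ => ?_)
    linear_combination (ℏ/m * pdx j (fun z => S z t) x) * (hρA j x)
      + (ℏ/m * pdx j (fun y => pdx j (fun z => S z t) y) x)
          * (Real.mul_self_sqrt (hρpos x t).le).symm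
  rw [hs2]
  rw [show (∑ j : Fin d, ν * (ℏ/(2*m)) * pdx j (fun y => pdx j (fun z => ρ z t) y) x)
      = ν * (ℏ/(2*m)) * ∑ j : Fin d, pdx j (fun y => pdx j (fun z => ρ z t) y) x from
    (Finset.mul_sum _ _ _).symm]
  refine mul_left_cancel₀ hℏ.ne' ?_
  linear_combination (2 * Real.sqrt (ρ x t)) * him
end
end

section
/- Let p : ℝ^d × ℝ → ℝ be smooth (C^∞) with p > 0 everywhere, let b : ℝ^d × ℝ → ℝ^d be smooth, and let κ ≥ 0 be a real constant. Suppose p solves the forward Kolmogorov (Fokker–Planck) equation ∂_t p = −⟨∇, b p⟩ + κ Δp at every (x,t). Define the backward drift b* := b − 2κ ∇ log p. Then at every (x,t): (i) p also solves the backward Kolmogorov equation ∂_t p = −⟨∇, b* p⟩ − κ Δp, and (ii) consequently p solves the continuity equation ∂_t p = −⟨∇, ṽ p⟩ with probability current ṽ := (b + b*)/2. -/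
noncomputable section

lemma key_lemma (d : ℕ) (c t : ℝ)
    (p : (Fin d → ℝ) → ℝ → ℝ)
    (b : (Fin d → ℝ) → ℝ → (Fin d → ℝ))
    (hp : ContDiff ℝ (⊤ : ℕ∞) (Function.uncurry p))
    (hppos : ∀ x t, 0 < p x t)
    (hb : ContDiff ℝ (⊤ : ℕ∞) (Function.uncurry b))
    (j : Fin d) (x : Fin d → ℝ) :
    pdx j (fun y => (b y t j - c * pdx j (fun z => Real.log (p z t)) y) * p y t) x
      = pdx j (fun y => b y t j * p y t) x
        - c * pdx j (fun y => pdx j (fun z => p z t) y) x := by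
  have hle : ((⊤ : ℕ∞) : WithTop ℕ∞) ≠ 0 := by simp
  have hpt : ContDiff ℝ (⊤ : ℕ∞) (fun y => p y t) :=
    hp.comp (contDiff_id.prodMk contDiff_const)
  have hbtj : ContDiff ℝ (⊤ : ℕ∞) (fun y => b y t j) :=
    contDiff_pi.mp (hb.comp (contDiff_id.prodMk contDiff_const)) j
  have hD : ContDiff ℝ (⊤ : ℕ∞) (fun y => pdx j (fun z => p z t) y) :=
    (hpt.fderiv_right (by exact_mod_cast le_top)).clm_apply contDiff_const
  have hfun : (fun y => (b y t j - c * pdx j (fun z => Real.log (p z t)) y) * p y t)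
      = fun y => b y t j * p y t - c * pdx j (fun z => p z t) y := by
    funext y
    have h1 : HasFDerivAt (fun z => p z t) (fderiv ℝ (fun z => p z t) y) y :=
      (hpt.differentiable hle y).hasFDerivAt
    have h2 := h1.log (hppos y t).ne'
    have hlog : pdx j (fun z => Real.log (p z t)) y
        = (p y t)⁻¹ * pdx j (fun z => p z t) y := by
      rw [pdx, h2.fderiv]
      simp [pdx]
    rw [hlog]
    have hne := (hppos y t).ne'
    field_simp
  rw [hfun]
  have hdiff1 : DifferentiableAt ℝ (fun y => b y t j * p y t) x :=
    (hbtj.differentiable hle x).mul (hpt.differentiable hle x)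
  have hdiff2 : DifferentiableAt ℝ (fun y => pdx j (fun z => p z t) y) x :=
    hD.differentiable hle x
  rw [pdx, fderiv_fun_sub hdiff1 (hdiff2.const_mul c), fderiv_const_mul hdiff2 c]
  simp [pdx]

/-- If a smooth positive density `p` solves the forward Kolmogorov
(Fokker–Planck) equation `∂ₜp = −⟨∇, b p⟩ + κ Δp` with smooth drift `b` and constant
`κ ≥ 0`, then with backward drift `b* = b − 2κ ∇ log p`:
(i) `p` solves the backward Kolmogorov equation `∂ₜp = −⟨∇, b* p⟩ − κ Δp`, and
(ii) `p` solves the continuity equation `∂ₜp = −⟨∇, ṽ p⟩` with `ṽ = (b + b*)/2`. -/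
theorem forward_kolmogorov_implies_backward_and_continuity
    (d : ℕ) (hd : 1 ≤ d) (κ : ℝ) (hκ : 0 ≤ κ)
    (p : (Fin d → ℝ) → ℝ → ℝ)
    (b : (Fin d → ℝ) → ℝ → (Fin d → ℝ))
    (hp : ContDiff ℝ (⊤ : ℕ∞) (Function.uncurry p))
    (hppos : ∀ x t, 0 < p x t)
    (hb : ContDiff ℝ (⊤ : ℕ∞) (Function.uncurry b))
    (hfwd : ∀ (x : Fin d → ℝ) (t : ℝ),
      deriv (fun s => p x s) t
        = -(∑ j : Fin d, pdx j (fun y => b y t j * p y t) x)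
          + κ * (∑ j : Fin d, pdx j (fun y => pdx j (fun z => p z t) y) x)) :
    ∀ (x : Fin d → ℝ) (t : ℝ),
      (deriv (fun s => p x s) t
          = -(∑ j : Fin d, pdx j
                (fun y => (b y t j - 2 * κ * pdx j (fun z => Real.log (p z t)) y) * p y t) x)
            - κ * (∑ j : Fin d, pdx j (fun y => pdx j (fun z => p z t) y) x))
      ∧ (deriv (fun s => p x s) t
          = -(∑ j : Fin d, pdx j
                (fun y =>
                  ((b y t j + (b y t j - 2 * κ * pdx j (fun z => Real.log (p z t)) y)) / 2)
                    * p y t) x)) := by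
  intro x t
  constructor
  · have hk : ∀ j : Fin d,
        pdx j (fun y => (b y t j - 2 * κ * pdx j (fun z => Real.log (p z t)) y) * p y t) x
          = pdx j (fun y => b y t j * p y t) x
            - 2 * κ * pdx j (fun y => pdx j (fun z => p z t) y) x :=
      fun j => key_lemma d (2 * κ) t p b hp hppos hb j x
    rw [hfwd x t]
    simp only [hk, Finset.sum_sub_distrib, ← Finset.mul_sum]
    ring
  · have he : ∀ j : Fin d,
        (fun y => ((b y t j + (b y t j - 2 * κ * pdx j (fun z => Real.log (p z t)) y)) / 2)
            * p y t)
          = fun y => (b y t j - κ * pdx j (fun z => Real.log (p z t)) y) * p y t := by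
      intro j; funext y; ring
    have hk : ∀ j : Fin d,
        pdx j (fun y => (b y t j - κ * pdx j (fun z => Real.log (p z t)) y) * p y t) x
          = pdx j (fun y => b y t j * p y t) x
            - κ * pdx j (fun y => pdx j (fun z => p z t) y) x :=
      fun j => key_lemma d κ t p b hp hppos hb j x
    rw [hfwd x t]
    simp only [he, hk, Finset.sum_sub_distrib, ← Finset.mul_sum]
    ring
end
end
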